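/- arXiv:1307.6208 — 10 statements merged into one kernel-verified Lean document; each statement's English description precedes it below -/
import Mathlib

section
/- Let r, t be sequences of nonzero reals and s a sequence with s₀ ≠ 0, and let (D_n) be the reciprocal coefficients of s (so ∑_{k=0}^n s_{n-k}(-1)^k D_k = δ_{n0}·s₀D₀ with s₀D₀=1). Then the matrix B with entries b_{nk} = (-1)^{n-k} D_{n-k} r_k / t_n for 0 ≤ k ≤ n and 0 otherwise is the two-sided inverse of the matrix A(r,s,t) with entries s_{n-k} t_k / r_n for 0 ≤ k ≤ n. -/
/-- The triangle `B` with entries `(-1)^{n-k} D_{n-k} r_k / t_n` is the two-sided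
inverse of the generalized-means triangle `A(r,s,t)`. -/
theorem stmt_2 (r s t D : ℕ → ℝ) (hr : ∀ n, r n ≠ 0) (ht : ∀ n, t n ≠ 0)
    (hs : s 0 ≠ 0) (hD0 : D 0 = 1 / s 0)
    (hD : ∀ n : ℕ, 1 ≤ n →
      (∑ k ∈ Finset.range (n + 1), (-1 : ℝ) ^ k * D k * s (n - k)) = 0) :
    let A : ℕ → ℕ → ℝ := fun n k => if k ≤ n then s (n - k) * t k / r n else 0
    let B : ℕ → ℕ → ℝ := fun n k =>
      if k ≤ n then (-1 : ℝ) ^ (n - k) * D (n - k) * r k / t n else 0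
    (∀ n k, (∑ j ∈ Finset.range (n + 1), A n j * B j k) = if n = k then 1 else 0) ∧
    (∀ n k, (∑ j ∈ Finset.range (n + 1), B n j * A j k) = if n = k then 1 else 0) := by
  intro A B
  have key : ∀ m : ℕ, (∑ i ∈ Finset.range (m + 1), (-1 : ℝ) ^ i * D i * s (m - i))
      = if m = 0 then 1 else 0 := by
    intro m
    rcases Nat.eq_zero_or_pos m with h | h
    · subst h
      rw [if_pos rfl, Finset.sum_range_one]
      simp only [pow_zero, one_mul, Nat.sub_zero, hD0]
      field_simp
    · rw [if_neg (by omega)]; exact hD m h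
  constructor
  · intro n k
    by_cases hkn : k ≤ n
    · have h1 : ∑ j ∈ Finset.range (n + 1), A n j * B j k
          = ∑ j ∈ Finset.Ico k (n + 1), A n j * B j k := by
        rw [Finset.range_eq_Ico, ← Finset.sum_Ico_consecutive _ (Nat.zero_le k) (by omega)]
        have hz : ∑ j ∈ Finset.Ico 0 k, A n j * B j k = 0 := by
          apply Finset.sum_eq_zero; intro j hj
          simp only [Finset.mem_Ico] at hj
          have : ¬ k ≤ j := by omega
          simp [B, this]
        rw [hz, zero_add]
      rw [h1, Finset.sum_Ico_eq_sum_range]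
      have hnk : n + 1 - k = (n - k) + 1 := by omega
      rw [hnk]
      have h2 : ∀ i ∈ Finset.range (n - k + 1),
          A n (k + i) * B (k + i) k
            = (r k / r n) * ((-1 : ℝ) ^ i * D i * s (n - k - i)) := by
        intro i hi
        simp only [Finset.mem_range] at hi
        have h3 : k + i ≤ n := by omega
        simp only [A, B, if_pos h3, if_pos (Nat.le_add_right k i)]
        have e1 : k + i - k = i := by omega
        have e2 : n - (k + i) = n - k - i := by omega
        rw [e1, e2]
        have h4 := ht (k + i)
        have h5 := hr n
        field_simp
      rw [Finset.sum_congr rfl h2, ← Finset.mul_sum, key (n - k)]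
      by_cases h : n = k
      · subst h
        rw [if_pos (by omega), if_pos rfl, mul_one, div_self (hr n)]
      · rw [if_neg (by omega), if_neg h, mul_zero]
    · rw [if_neg (by omega)]
      apply Finset.sum_eq_zero; intro j hj
      simp only [Finset.mem_range] at hj
      have : ¬ k ≤ j := by omega
      simp [B, this]
  · intro n k
    by_cases hkn : k ≤ n
    · have h1 : ∑ j ∈ Finset.range (n + 1), B n j * A j k
          = ∑ j ∈ Finset.Ico k (n + 1), B n j * A j k := by
        rw [Finset.range_eq_Ico, ← Finset.sum_Ico_consecutive _ (Nat.zero_le k) (by omega)]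
        have hz : ∑ j ∈ Finset.Ico 0 k, B n j * A j k = 0 := by
          apply Finset.sum_eq_zero; intro j hj
          simp only [Finset.mem_Ico] at hj
          have : ¬ k ≤ j := by omega
          simp [A, this]
        rw [hz, zero_add]
      rw [h1, Finset.sum_Ico_eq_sum_range]
      have hnk : n + 1 - k = (n - k) + 1 := by omega
      rw [hnk]
      set m := n - k with hm
      have h2 : ∀ i ∈ Finset.range (m + 1),
          B n (k + i) * A (k + i) k
            = (t k / t n) * ((-1 : ℝ) ^ (m - i) * D (m - i) * s (m - (m - i))) := by
        intro i hi
        simp only [Finset.mem_range] at hi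
        have h3 : k + i ≤ n := by omega
        simp only [A, B, if_pos h3, if_pos (Nat.le_add_right k i)]
        have e1 : k + i - k = i := by omega
        have e2 : n - (k + i) = m - i := by omega
        have e3 : m - (m - i) = i := by omega
        rw [e1, e2, e3]
        have h4 := hr (k + i)
        have h5 := ht n
        field_simp
      rw [Finset.sum_congr rfl h2, ← Finset.mul_sum]
      have hrefl : (∑ i ∈ Finset.range (m + 1),
          (-1 : ℝ) ^ (m - i) * D (m - i) * s (m - (m - i)))
          = ∑ i ∈ Finset.range (m + 1), (-1 : ℝ) ^ i * D i * s (m - i) := by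
        rw [← Finset.sum_range_reflect (fun i => (-1 : ℝ) ^ i * D i * s (m - i)) (m + 1)]
        apply Finset.sum_congr rfl
        intro i hi
        simp only [Finset.mem_range] at hi
        congr 1 <;> omega
      rw [hrefl, key m]
      by_cases h : n = k
      · subst h
        rw [if_pos (by omega), if_pos rfl, mul_one, div_self (ht n)]
      · rw [if_neg (by omega), if_neg h, mul_zero]
    · rw [if_neg (by omega)]
      apply Finset.sum_eq_zero; intro j hj
      simp only [Finset.mem_range] at hj
      have : ¬ k ≤ j := by omega
      simp [A, this]
end

section
/- Let r, t be sequences of nonzero reals and s a sequence with s₀ ≠ 0. Define ℓ∞(r,s,t;Δ) = { x : ℕ → ℝ | sup_n |(1/r_n) ∑_{k=0}^{n} s_{n-k} t_k (x_k − x_{k−1})| < ∞ } (with x_{−1} = 0), equipped with ‖x‖ = sup_n |(1/r_n) ∑_{k=0}^{n} s_{n-k} t_k (x_k − x_{k−1})|. Then ℓ∞(r,s,t;Δ) is a complete normed linear space. -/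
open Finset Filter

section aux
variable (r s t : ℕ → ℝ)

noncomputable def Tt (x : ℕ → ℝ) (n : ℕ) : ℝ :=
  (1 / r n) * ∑ k ∈ Finset.range (n + 1),
    s (n - k) * t k * (x k - if k = 0 then 0 else x (k - 1))

lemma Tt_zero (n : ℕ) : Tt r s t 0 n = 0 := by
  simp [Tt]

lemma Tt_add (x y : ℕ → ℝ) (n : ℕ) :
    Tt r s t (x + y) n = Tt r s t x n + Tt r s t y n := by
  simp only [Tt, Pi.add_apply]
  rw [← mul_add, ← Finset.sum_add_distrib]
  congr 1
  apply Finset.sum_congr rfl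
  intro k _
  split_ifs <;> ring

lemma Tt_smul (c : ℝ) (x : ℕ → ℝ) (n : ℕ) :
    Tt r s t (c • x) n = c * Tt r s t x n := by
  simp only [Tt, Pi.smul_apply, smul_eq_mul]
  have h : ∀ k ∈ Finset.range (n + 1),
      s (n - k) * t k * (c * x k - if k = 0 then 0 else c * x (k - 1)) =
      c * (s (n - k) * t k * (x k - if k = 0 then 0 else x (k - 1))) := by
    intro k _; split_ifs <;> ring
  rw [Finset.sum_congr rfl h, ← Finset.mul_sum]
  ring

lemma Tt_sub (x y : ℕ → ℝ) (n : ℕ) :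
    Tt r s t (x - y) n = Tt r s t x n - Tt r s t y n := by
  have : x - y = x + (-1 : ℝ) • y := by
    funext k; simp [sub_eq_add_neg]
  rw [this, Tt_add, Tt_smul]; ring

noncomputable def dseq (y : ℕ → ℝ) : ℕ → ℝ
  | n => (y n * r n - ∑ k ∈ (Finset.range n).attach,
      s (n - k.1) * t k.1 * dseq y k.1) / (s 0 * t n)
  decreasing_by exact Finset.mem_range.mp k.2

lemma dseq_eq (y : ℕ → ℝ) (n : ℕ) :
    dseq r s t y n = (y n * r n -
      ∑ k ∈ Finset.range n, s (n - k) * t k * dseq r s t y k) / (s 0 * t n) := by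
  rw [dseq, Finset.sum_attach (Finset.range n) (fun k => s (n - k) * t k * dseq r s t y k)]

noncomputable def xseq (y : ℕ → ℝ) (n : ℕ) : ℝ :=
  ∑ k ∈ Finset.range (n + 1), dseq r s t y k

lemma xseq_delta (y : ℕ → ℝ) (k : ℕ) :
    xseq r s t y k - (if k = 0 then 0 else xseq r s t y (k - 1)) = dseq r s t y k := by
  cases k with
  | zero => simp [xseq]
  | succ m => simp [xseq, Finset.sum_range_succ]

lemma Tt_xseq (hr : ∀ n, r n ≠ 0) (ht : ∀ n, t n ≠ 0) (hs : s 0 ≠ 0)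
    (y : ℕ → ℝ) (n : ℕ) : Tt r s t (xseq r s t y) n = y n := by
  simp only [Tt]
  rw [Finset.sum_congr rfl fun k _ => by rw [xseq_delta]]
  rw [Finset.sum_range_succ, Nat.sub_self, dseq_eq]
  have h1 : s 0 * t n ≠ 0 := mul_ne_zero hs (ht n)
  field_simp
  rw [mul_div_cancel_left₀ _ (ht n), add_sub_cancel, mul_div_cancel_left₀ _ (hr n)]

lemma Tt_eq_zero (hr : ∀ n, r n ≠ 0) (ht : ∀ n, t n ≠ 0) (hs : s 0 ≠ 0)
    (x : ℕ → ℝ) (h : ∀ n, Tt r s t x n = 0) : x = 0 := by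
  funext n
  induction n using Nat.strong_induction_on with
  | _ n ih =>
    have h0 := h n
    simp only [Tt] at h0
    have hrn : (1 / r n : ℝ) ≠ 0 := one_div_ne_zero (hr n)
    have hsum : ∑ k ∈ Finset.range (n + 1),
        s (n - k) * t k * (x k - if k = 0 then 0 else x (k - 1)) = 0 := by
      rcases mul_eq_zero.mp h0 with h' | h'
      · exact absurd h' hrn
      · exact h'
    rw [Finset.sum_range_succ] at hsum
    have hz : ∑ k ∈ Finset.range n,
        s (n - k) * t k * (x k - if k = 0 then 0 else x (k - 1)) = 0 := by
      apply Finset.sum_eq_zero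
      intro k hk
      have hk' := Finset.mem_range.mp hk
      have hxk : x k = 0 := ih k hk'
      split_ifs with h0k
      · rw [hxk]; ring
      · have : x (k - 1) = 0 := ih (k - 1) (lt_of_le_of_lt (Nat.pred_le k) hk')
        rw [hxk, this]; ring
    rw [hz, zero_add, Nat.sub_self] at hsum
    have hxn : x n - (if n = 0 then 0 else x (n - 1)) = x n := by
      split_ifs with h0n
      · ring
      · have : x (n - 1) = 0 := ih (n - 1) (Nat.pred_lt h0n)
        rw [this]; ring
    rw [hxn] at hsum
    have := mul_ne_zero hs (ht n)
    have : x n = 0 := by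
      rcases mul_eq_zero.mp hsum with h' | h'
      · exact absurd h' (mul_ne_zero hs (ht n))
      · exact h'
    simpa using this

end aux

/-- `ℓ∞(r,s,t;Δ)` with the norm `sup_n |(A(r,s,t)·Δ x)_n|` is a complete normed
linear space: it is a linear subspace, the functional is a norm on it, and every
Cauchy sequence in it converges to a member of it. -/
theorem stmt_3 (r s t : ℕ → ℝ) (hr : ∀ n, r n ≠ 0) (ht : ∀ n, t n ≠ 0)
    (hs : s 0 ≠ 0) :
    let T : (ℕ → ℝ) → ℕ → ℝ := fun x n =>
      (1 / r n) * ∑ k ∈ Finset.range (n + 1),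
        s (n - k) * t k * (x k - if k = 0 then 0 else x (k - 1))
    let X : Set (ℕ → ℝ) := {x | BddAbove (Set.range fun n => |T x n|)}
    let N : (ℕ → ℝ) → ℝ := fun x => ⨆ n, |T x n|
    ((0 : ℕ → ℝ) ∈ X) ∧
    (∀ x ∈ X, ∀ y ∈ X, x + y ∈ X) ∧
    (∀ (c : ℝ), ∀ x ∈ X, c • x ∈ X) ∧
    (∀ x ∈ X, 0 ≤ N x) ∧
    (∀ x ∈ X, (N x = 0 ↔ x = 0)) ∧
    (∀ (c : ℝ), ∀ x ∈ X, N (c • x) = |c| * N x) ∧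
    (∀ x ∈ X, ∀ y ∈ X, N (x + y) ≤ N x + N y) ∧
    (∀ f : ℕ → (ℕ → ℝ), (∀ m, f m ∈ X) →
      (∀ ε : ℝ, 0 < ε → ∃ M, ∀ m ≥ M, ∀ l ≥ M, N (f m - f l) < ε) →
      ∃ x ∈ X, ∀ ε : ℝ, 0 < ε → ∃ M, ∀ m ≥ M, N (f m - x) < ε) := by
  intro T X N
  have hT : ∀ x n, T x n = Tt r s t x n := fun _ _ => rfl
  -- membership characterization
  have memX : ∀ x : ℕ → ℝ, x ∈ X ↔ ∃ C, ∀ n, |Tt r s t x n| ≤ C := by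
    intro x
    constructor
    · rintro ⟨C, hC⟩
      exact ⟨C, fun n => hC ⟨n, rfl⟩⟩
    · rintro ⟨C, hC⟩
      exact ⟨C, by rintro y ⟨n, rfl⟩; exact hC n⟩
  have hNle : ∀ x ∈ X, ∀ n, |Tt r s t x n| ≤ N x := by
    intro x hx n
    exact le_ciSup hx n
  have hNle' : ∀ (x : ℕ → ℝ) (a : ℝ), 0 ≤ a → (∀ n, |Tt r s t x n| ≤ a) → N x ≤ a := by
    intro x a ha h
    exact Real.iSup_le h ha
  have hNnonneg : ∀ x : ℕ → ℝ, 0 ≤ N x :=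
    fun x => Real.iSup_nonneg fun n => abs_nonneg _
  have h0X : (0 : ℕ → ℝ) ∈ X := (memX 0).mpr ⟨0, fun n => by rw [Tt_zero]; simp⟩
  have haddX : ∀ x ∈ X, ∀ y ∈ X, x + y ∈ X := by
    intro x hx y hy
    obtain ⟨Cx, hCx⟩ := (memX x).mp hx
    obtain ⟨Cy, hCy⟩ := (memX y).mp hy
    refine (memX _).mpr ⟨Cx + Cy, fun n => ?_⟩
    rw [Tt_add]
    exact (abs_add_le _ _).trans (add_le_add (hCx n) (hCy n))
  have hsmulX : ∀ (c : ℝ), ∀ x ∈ X, c • x ∈ X := by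
    intro c x hx
    obtain ⟨Cx, hCx⟩ := (memX x).mp hx
    refine (memX _).mpr ⟨|c| * Cx, fun n => ?_⟩
    rw [Tt_smul, abs_mul]
    exact mul_le_mul_of_nonneg_left (hCx n) (abs_nonneg c)
  have hsubX : ∀ x ∈ X, ∀ y ∈ X, x - y ∈ X := by
    intro x hx y hy
    have : x - y = x + (-1 : ℝ) • y := by funext k; simp [sub_eq_add_neg]
    rw [this]
    exact haddX x hx _ (hsmulX (-1) y hy)
  refine ⟨h0X, haddX, hsmulX, fun x _ => hNnonneg x, ?_, ?_, ?_, ?_⟩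
  · -- N x = 0 ↔ x = 0
    intro x hx
    constructor
    · intro hN
      apply Tt_eq_zero r s t hr ht hs
      intro n
      have h1 := hNle x hx n
      rw [hN] at h1
      exact abs_eq_zero.mp (le_antisymm h1 (abs_nonneg _))
    · intro hx0
      subst hx0
      have : ∀ n, |T (0 : ℕ → ℝ) n| = 0 := fun n => by rw [hT, Tt_zero]; simp
      show (⨆ n, |T (0 : ℕ → ℝ) n|) = 0
      calc (⨆ n, |T (0 : ℕ → ℝ) n|) = ⨆ _ : ℕ, (0 : ℝ) := by
            congr 1; funext n; exact this n
        _ = 0 := ciSup_const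
  · -- homogeneity
    intro c x hx
    have h1 : ∀ n, |T (c • x) n| = |c| * |Tt r s t x n| := fun n => by
      rw [hT, Tt_smul, abs_mul]
    show (⨆ n, |T (c • x) n|) = |c| * N x
    calc (⨆ n, |T (c • x) n|) = ⨆ n, |c| * |Tt r s t x n| := by
          congr 1; funext n; exact h1 n
      _ = |c| * ⨆ n, |Tt r s t x n| := (Real.mul_iSup_of_nonneg (abs_nonneg c) _).symm
      _ = |c| * N x := rfl
  · -- triangle inequality
    intro x hx y hy
    refine hNle' _ _ (add_nonneg (hNnonneg x) (hNnonneg y)) fun n => ?_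
    rw [Tt_add]
    exact (abs_add_le _ _).trans (add_le_add (hNle x hx n) (hNle y hy n))
  · -- completeness
    intro f hf hcau
    have hbound : ∀ m l n, |Tt r s t (f m) n - Tt r s t (f l) n| ≤ N (f m - f l) := by
      intro m l n
      rw [← Tt_sub]
      exact hNle _ (hsubX _ (hf m) _ (hf l)) n
    have hcauchy : ∀ n, CauchySeq (fun m => Tt r s t (f m) n) := by
      intro n
      rw [Metric.cauchySeq_iff]
      intro ε hε
      obtain ⟨M, hM⟩ := hcau ε hε
      refine ⟨M, fun m hm l hl => ?_⟩
      calc dist (Tt r s t (f m) n) (Tt r s t (f l) n)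
          = |Tt r s t (f m) n - Tt r s t (f l) n| := Real.dist_eq _ _
        _ ≤ N (f m - f l) := hbound m l n
        _ < ε := hM m hm l hl
    have hg : ∀ n, ∃ L, Filter.Tendsto (fun m => Tt r s t (f m) n) Filter.atTop (nhds L) :=
      fun n => cauchySeq_tendsto_of_complete (hcauchy n)
    choose g hgt using hg
    have key : ∀ ε : ℝ, 0 < ε → ∃ M, ∀ m ≥ M, ∀ n, |Tt r s t (f m) n - g n| ≤ ε := by
      intro ε hε
      obtain ⟨M, hM⟩ := hcau ε hε
      refine ⟨M, fun m hm n => ?_⟩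
      have h1 : Filter.Tendsto (fun l => |Tt r s t (f m) n - Tt r s t (f l) n|)
          Filter.atTop (nhds |Tt r s t (f m) n - g n|) :=
        (Filter.Tendsto.sub tendsto_const_nhds (hgt n)).abs
      refine le_of_tendsto h1 ?_
      filter_upwards [Filter.eventually_ge_atTop M] with l hl
      exact le_of_lt (lt_of_le_of_lt (hbound m l n) (hM m hm l hl))
    set x := xseq r s t g with hxdef
    have hxg : ∀ n, Tt r s t x n = g n := fun n => Tt_xseq r s t hr ht hs g n
    obtain ⟨M1, hM1⟩ := key 1 one_pos
    have hdiffX : ∀ m, m ≥ M1 → f m - x ∈ X := by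
      intro m hm
      refine (memX _).mpr ⟨1, fun n => ?_⟩
      rw [Tt_sub, hxg]
      exact hM1 m hm n
    have hxX : x ∈ X := by
      have h1 : x = f M1 - (f M1 - x) := by funext k; simp
      rw [h1]
      exact hsubX _ (hf M1) _ (hdiffX M1 le_rfl)
    refine ⟨x, hxX, ?_⟩
    intro ε hε
    obtain ⟨M, hM⟩ := key (ε / 2) (by positivity)
    refine ⟨M, fun m hm => ?_⟩
    have h2 : N (f m - x) ≤ ε / 2 := by
      refine hNle' _ _ (by positivity) fun n => ?_
      rw [Tt_sub, hxg]
      exact hM m hm n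
    linarith
end

section
/- Let r, t be sequences of nonzero reals and s a sequence with s₀ ≠ 0. Define c₀(r,s,t;Δ) = { x : ℕ → ℝ | (1/r_n) ∑_{k=0}^{n} s_{n-k} t_k (x_k − x_{k−1}) → 0 } with norm ‖x‖ = sup_n |(1/r_n) ∑_{k=0}^{n} s_{n-k} t_k (x_k − x_{k−1})|. Then c₀(r,s,t;Δ) is linearly isometrically isomorphic to c₀, the space of null sequences with the sup norm. -/
noncomputable def uuAux (r s t y : ℕ → ℝ) : ℕ → ℝ := fun n =>
  (r n * y n - ∑ k ∈ (Finset.range n).attach, s (n - k.1) * t k.1 * uuAux r s t y k.1)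
    / (s 0 * t n)
termination_by n => n
decreasing_by exact Finset.mem_range.mp k.2

lemma uuAux_eq (r s t y : ℕ → ℝ) (n : ℕ) :
    uuAux r s t y n =
      (r n * y n - ∑ k ∈ Finset.range n, s (n - k) * t k * uuAux r s t y k)
        / (s 0 * t n) := by
  rw [uuAux, ← Finset.sum_attach (Finset.range n) (fun k => s (n - k) * t k * uuAux r s t y k)]

/-- The map `T = A(r,s,t)·Δ` is a linear isometric isomorphism from
`c₀(r,s,t;Δ)` onto `c₀`. -/
theorem stmt_5 (r s t : ℕ → ℝ) (hr : ∀ n, r n ≠ 0) (ht : ∀ n, t n ≠ 0)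
    (hs : s 0 ≠ 0) :
    let T : (ℕ → ℝ) → ℕ → ℝ := fun x n =>
      (1 / r n) * ∑ k ∈ Finset.range (n + 1),
        s (n - k) * t k * (x k - if k = 0 then 0 else x (k - 1))
    let X0 : Set (ℕ → ℝ) := {x | Filter.Tendsto (T x) Filter.atTop (nhds 0)}
    let C0 : Set (ℕ → ℝ) := {y | Filter.Tendsto y Filter.atTop (nhds 0)}
    let N : (ℕ → ℝ) → ℝ := fun x => ⨆ n, |T x n|
    let Ny : (ℕ → ℝ) → ℝ := fun y => ⨆ n, |y n|
    (∀ x y : ℕ → ℝ, T (x + y) = T x + T y) ∧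
    (∀ (c : ℝ) (x : ℕ → ℝ), T (c • x) = c • T x) ∧
    (∀ x ∈ X0, T x ∈ C0) ∧
    (∀ x y : ℕ → ℝ, T x = T y → x = y) ∧
    (∀ y ∈ C0, ∃ x ∈ X0, T x = y) ∧
    (∀ x ∈ X0, N x = Ny (T x)) := by
  intro T X0 C0 N Ny
  -- difference operator
  set d : (ℕ → ℝ) → ℕ → ℝ := fun x k => x k - if k = 0 then 0 else x (k - 1) with hd
  have hTdef : ∀ x n, T x n = (1 / r n) * ∑ k ∈ Finset.range (n + 1),
      s (n - k) * t k * d x k := fun x n => rfl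
  -- injectivity of the map determined by full sums
  have key : ∀ x z : ℕ → ℝ, T x = T z → x = z := by
    intro x z h
    have hF : ∀ n, ∑ k ∈ Finset.range (n + 1), s (n - k) * t k * d x k
        = ∑ k ∈ Finset.range (n + 1), s (n - k) * t k * d z k := by
      intro n
      have h1 := congrFun h n
      rw [hTdef, hTdef] at h1
      exact mul_left_cancel₀ (one_div_ne_zero (hr n)) h1
    have hdeq : ∀ n, d x n = d z n := by
      intro n
      induction n using Nat.strong_induction_on with
      | _ n ih =>
        have h2 := hF n
        rw [Finset.sum_range_succ, Finset.sum_range_succ] at h2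
        rw [Finset.sum_congr rfl (fun k hk => by
          rw [ih k (Finset.mem_range.mp hk)])] at h2
        have h3 : s (n - n) * t n * d x n = s (n - n) * t n * d z n := by
          linarith
        have hne : s (n - n) * t n ≠ 0 := by
          simp only [Nat.sub_self]; exact mul_ne_zero hs (ht n)
        exact mul_left_cancel₀ hne h3
    funext n
    induction n with
    | zero =>
      have := hdeq 0
      simpa [hd] using this
    | succ m ihm =>
      have := hdeq (m + 1)
      simp only [hd, Nat.succ_ne_zero, if_false, Nat.add_sub_cancel] at this
      linarith
  refine ⟨?_, ?_, fun x hx => hx, key, ?_, fun x _ => rfl⟩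
  · intro x y
    funext n
    simp only [hTdef, Pi.add_apply, hd]
    rw [← mul_add, ← Finset.sum_add_distrib]
    congr 1
    apply Finset.sum_congr rfl
    intro k _
    split <;> ring
  · intro c x
    funext n
    simp only [hTdef, Pi.smul_apply, smul_eq_mul, hd]
    rw [show (∑ k ∈ Finset.range (n + 1),
        s (n - k) * t k * (c * x k - if k = 0 then 0 else c * x (k - 1)))
      = c * ∑ k ∈ Finset.range (n + 1),
        s (n - k) * t k * (x k - if k = 0 then 0 else x (k - 1)) by
        rw [Finset.mul_sum]; apply Finset.sum_congr rfl; intro k _; split <;> ring]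
    ring
  · intro y hy
    set u := uuAux r s t y with hu
    set x : ℕ → ℝ := fun n => ∑ k ∈ Finset.range (n + 1), u k with hx
    have hdx : ∀ k, d x k = u k := by
      intro k
      cases k with
      | zero => simp [hd, hx]
      | succ m =>
        simp only [hd, hx, Nat.succ_ne_zero, if_false, Nat.add_sub_cancel]
        rw [Finset.sum_range_succ]
        ring
    have hTx : T x = y := by
      funext n
      rw [hTdef]
      have hsum : ∑ k ∈ Finset.range (n + 1), s (n - k) * t k * d x k = r n * y n := by
        simp only [hdx]
        rw [Finset.sum_range_succ, Nat.sub_self]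
        have hne : s 0 * t n ≠ 0 := mul_ne_zero hs (ht n)
        have h5 : s 0 * t n * u n = r n * y n - ∑ k ∈ Finset.range n, s (n - k) * t k * u k := by
          rw [hu, uuAux_eq r s t y n]
          field_simp
          exact mul_div_cancel_left₀ _ (ht n)
        linarith
      rw [hsum, one_div, inv_mul_cancel_left₀ (hr n)]
    exact ⟨x, by rw [Set.mem_setOf_eq, hTx]; exact hy, hTx⟩
end

section
/- Let r, t be sequences of nonzero reals, s a sequence with s₀ ≠ 0, and (D_k) the reciprocal coefficients of s. For j ∈ ℕ define b^{(j)} ∈ ℝ^ℕ by b^{(j)}_n = ∑_{k=0}^{n−j} (−1)^k (D_k / t_{k+j}) r_j if j ≤ n and 0 if j > n. Then (b^{(j)})_{j≥0} is a Schauder basis of c₀(r,s,t;Δ): every x ∈ c₀(r,s,t;Δ) has a unique representation x = ∑_{j=0}^{∞} μ_j b^{(j)} converging in the norm of c₀(r,s,t;Δ), where μ_j = (1/r_j) ∑_{k=0}^{j} s_{j−k} t_k (x_k − x_{k−1}). -/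
/-- The sequences `b^{(j)}` form a Schauder basis of `c₀(r,s,t;Δ)`: every `x` has
a unique norm-convergent expansion `x = ∑_j μ_j b^{(j)}` with `μ_j = (T x)_j`. -/
theorem stmt_6 (r s t D : ℕ → ℝ) (hr : ∀ n, r n ≠ 0) (ht : ∀ n, t n ≠ 0)
    (hs : s 0 ≠ 0) (hD0 : D 0 = 1 / s 0)
    (hD : ∀ n : ℕ, 1 ≤ n →
      (∑ k ∈ Finset.range (n + 1), (-1 : ℝ) ^ k * D k * s (n - k)) = 0) :
    let T : (ℕ → ℝ) → ℕ → ℝ := fun x n =>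
      (1 / r n) * ∑ k ∈ Finset.range (n + 1),
        s (n - k) * t k * (x k - if k = 0 then 0 else x (k - 1))
    let X0 : Set (ℕ → ℝ) := {x | Filter.Tendsto (T x) Filter.atTop (nhds 0)}
    let N : (ℕ → ℝ) → ℝ := fun x => ⨆ n, |T x n|
    let b : ℕ → ℕ → ℝ := fun j n =>
      if j ≤ n then ∑ k ∈ Finset.range (n - j + 1), (-1 : ℝ) ^ k * (D k / t (k + j)) * r j
      else 0
    ∀ x ∈ X0,
      Filter.Tendsto
        (fun m => N (x - (fun n => ∑ j ∈ Finset.range (m + 1), T x j * b j n)))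
        Filter.atTop (nhds 0) ∧
      (∀ μ : ℕ → ℝ,
        Filter.Tendsto
          (fun m => N (x - (fun n => ∑ j ∈ Finset.range (m + 1), μ j * b j n)))
          Filter.atTop (nhds 0) → μ = T x) := by
  intro T X0 N b x hx
  have hb_apply : ∀ j n, b j n = if j ≤ n then
      ∑ k ∈ Finset.range (n - j + 1), (-1 : ℝ) ^ k * (D k / t (k + j)) * r j else 0 :=
    fun j n => rfl
  have hΔ : ∀ j k : ℕ, (b j k - if k = 0 then (0:ℝ) else b j (k-1))
      = if j ≤ k then (-1:ℝ)^(k-j) * D (k-j) * r j / t k else 0 := by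
    intro j k
    rcases lt_trichotomy k j with h | h | h
    · have h1 : b j k = 0 := by rw [hb_apply]; exact if_neg (by omega)
      have h2 : (if k = 0 then (0:ℝ) else b j (k-1)) = 0 := by
        rcases Nat.eq_zero_or_pos k with h0 | h0
        · simp [h0]
        · rw [if_neg (by omega), hb_apply]; exact if_neg (by omega)
      rw [h1, h2, sub_zero]
      exact (if_neg (by omega)).symm
    · subst h
      have h1 : b k k = ∑ i ∈ Finset.range (k - k + 1),
          (-1 : ℝ) ^ i * (D i / t (i + k)) * r k := by
        rw [hb_apply]; exact if_pos le_rfl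
      have h2 : (if k = 0 then (0:ℝ) else b k (k-1)) = 0 := by
        rcases Nat.eq_zero_or_pos k with h0 | h0
        · simp [h0]
        · rw [if_neg (by omega), hb_apply]; exact if_neg (by omega)
      rw [h1, h2, sub_zero, Nat.sub_self, Finset.sum_range_one, if_pos le_rfl,
        Nat.zero_add]
      ring
    · have h1 : b j k = ∑ i ∈ Finset.range (k - j + 1),
          (-1 : ℝ) ^ i * (D i / t (i + j)) * r j := by
        rw [hb_apply]; exact if_pos (by omega)
      have h2 : (if k = 0 then (0:ℝ) else b j (k-1)) = ∑ i ∈ Finset.range (k - j),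
          (-1 : ℝ) ^ i * (D i / t (i + j)) * r j := by
        rw [if_neg (by omega), hb_apply, if_pos (by omega : j ≤ k - 1),
          show k - 1 - j + 1 = k - j by omega]
      rw [h1, h2, show k - j + 1 = (k - j) + 1 from rfl, Finset.sum_range_succ,
        add_sub_cancel_left, if_pos (by omega : j ≤ k),
        show k - j + j = k by omega]
      ring
  have hTb : ∀ j n, T (b j) n = if j = n then 1 else 0 := by
    intro j n
    have hterm : ∀ k, s (n-k) * t k * (b j k - if k = 0 then (0:ℝ) else b j (k-1))
        = if j ≤ k then s (n-k) * ((-1:ℝ)^(k-j) * D (k-j)) * r j else 0 := by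
      intro k
      rw [hΔ]
      split_ifs with hjk
      · field_simp [ht k]
      · simp
    show (1 / r n) * ∑ k ∈ Finset.range (n+1),
        s (n-k) * t k * (b j k - if k = 0 then (0:ℝ) else b j (k-1)) = _
    rw [Finset.sum_congr rfl fun k _ => hterm k]
    by_cases hjn : j ≤ n
    · have e1 : ∑ k ∈ Finset.range (n+1),
          (if j ≤ k then s (n-k) * ((-1:ℝ)^(k-j) * D (k-j)) * r j else 0)
          = ∑ k ∈ Finset.Ico j (n+1), s (n-k) * ((-1:ℝ)^(k-j) * D (k-j)) * r j := by
        rw [Finset.range_eq_Ico,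
          ← Finset.sum_Ico_consecutive _ (Nat.zero_le j) (by omega : j ≤ n+1),
          Finset.sum_eq_zero (fun k hk => if_neg
            (by have := Finset.mem_Ico.mp hk; omega)), zero_add]
        exact Finset.sum_congr rfl (fun k hk => if_pos (Finset.mem_Ico.mp hk).1)
      rw [e1, Finset.sum_Ico_eq_sum_range]
      have e2 : ∑ i ∈ Finset.range (n+1-j), s (n-(j+i)) * ((-1:ℝ)^((j+i)-j) * D ((j+i)-j)) * r j
          = r j * ∑ i ∈ Finset.range ((n-j)+1), (-1:ℝ)^i * D i * s ((n-j)-i) := by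
        rw [Finset.mul_sum, show n+1-j = (n-j)+1 by omega]
        refine Finset.sum_congr rfl fun i hi => ?_
        rw [show j+i-j = i by omega, show n-(j+i) = (n-j)-i by omega]
        ring
      rw [e2]
      rcases eq_or_lt_of_le hjn with he | hl
      · rw [show n - j = 0 by omega, Finset.sum_range_one, if_pos he, he, hD0]
        field_simp
        exact div_self (hr n)
      · rw [hD (n-j) (by omega), mul_zero, mul_zero, if_neg (by omega)]
    · rw [Finset.sum_eq_zero (fun k hk => if_neg
        (by have := Finset.mem_range.mp hk; omega)), mul_zero, if_neg (by omega)]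
  have hT : ∀ (y : ℕ → ℝ) n, T y n = (1 / r n) * ∑ k ∈ Finset.range (n + 1),
      s (n - k) * t k * (y k - if k = 0 then 0 else y (k - 1)) := fun y n => rfl
  have hN_def : ∀ y : ℕ → ℝ, N y = ⨆ n, |T y n| := fun y => rfl
  have hTsub : ∀ (u v : ℕ → ℝ) (n : ℕ), T (u - v) n = T u n - T v n := by
    intro u v n
    rw [hT, hT, hT, ← mul_sub, ← Finset.sum_sub_distrib]
    congr 1
    refine Finset.sum_congr rfl fun k _ => ?_
    simp only [Pi.sub_apply]
    split_ifs <;> ring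
  have hTsum : ∀ (c : ℕ → ℝ) (w : ℕ → ℕ → ℝ) (m n : ℕ),
      T (fun i => ∑ j ∈ Finset.range m, c j * w j i) n
        = ∑ j ∈ Finset.range m, c j * T (w j) n := by
    intro c w m n
    rw [hT]
    have e0 : ∀ k, s (n-k) * t k * ((∑ j ∈ Finset.range m, c j * w j k)
          - if k = 0 then (0:ℝ) else ∑ j ∈ Finset.range m, c j * w j (k-1))
        = ∑ j ∈ Finset.range m, c j * (s (n-k) * t k * (w j k - if k = 0 then 0 else w j (k-1))) := by
      intro k
      have h1 : (if k = 0 then (0:ℝ) else ∑ j ∈ Finset.range m, c j * w j (k-1))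
          = ∑ j ∈ Finset.range m, c j * (if k = 0 then 0 else w j (k-1)) := by
        split_ifs with h
        · simp
        · rfl
      rw [h1, ← Finset.sum_sub_distrib, Finset.mul_sum]
      refine Finset.sum_congr rfl fun j _ => ?_
      ring
    rw [Finset.sum_congr rfl fun k _ => e0 k, Finset.sum_comm, Finset.mul_sum]
    refine Finset.sum_congr rfl fun j _ => ?_
    rw [← Finset.mul_sum, hT]
    ring
  have hlin : ∀ (μ : ℕ → ℝ) (m n : ℕ),
      T (x - fun i => ∑ j ∈ Finset.range (m+1), μ j * b j i) n
        = T x n - (if n ≤ m then μ n else 0) := by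
    intro μ m n
    rw [hTsub, hTsum]
    congr 1
    rw [Finset.sum_congr rfl fun j _ => by rw [hTb j n]]
    simp only [mul_ite, mul_one, mul_zero]
    rw [Finset.sum_ite_eq' (Finset.range (m+1)) n μ]
    simp [Nat.lt_succ_iff]
  constructor
  · rw [Metric.tendsto_atTop]
    intro ε hε
    obtain ⟨M, hM⟩ := Metric.tendsto_atTop.mp hx (ε/2) (by positivity)
    refine ⟨M, fun m hm => ?_⟩
    have hb1 : ∀ n', |T (x - fun i => ∑ j ∈ Finset.range (m+1), T x j * b j i) n'| ≤ ε/2 := by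
      intro n'
      rw [hlin (T x) m n']
      by_cases h : n' ≤ m
      · rw [if_pos h, sub_self, abs_zero]
        positivity
      · rw [if_neg h, sub_zero]
        have h2 := hM n' (by omega)
        rw [Real.dist_eq, sub_zero] at h2
        exact le_of_lt h2
    have hN1 : N (x - fun i => ∑ j ∈ Finset.range (m+1), T x j * b j i) ≤ ε/2 := by
      rw [hN_def]
      exact Real.iSup_le hb1 (by positivity)
    have hN0 : 0 ≤ N (x - fun i => ∑ j ∈ Finset.range (m+1), T x j * b j i) := by
      rw [hN_def]
      exact Real.iSup_nonneg fun n' => abs_nonneg _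
    rw [Real.dist_eq, sub_zero, abs_of_nonneg hN0]
    linarith
  · intro μ hμ
    obtain ⟨M0, hM0⟩ := Metric.tendsto_atTop.mp hx 1 one_pos
    set C := 1 + ∑ i ∈ Finset.range M0, |T x i| with hCdef
    have hC : ∀ n, |T x n| ≤ C := by
      intro n
      by_cases h : n < M0
      · have h1 : |T x n| ≤ ∑ i ∈ Finset.range M0, |T x i| :=
          Finset.single_le_sum (f := fun i => |T x i|) (fun i _ => abs_nonneg _)
            (Finset.mem_range.mpr h)
        simp only [hCdef]
        linarith
      · have h1 := hM0 n (by omega)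
        rw [Real.dist_eq, sub_zero] at h1
        have hsum : 0 ≤ ∑ i ∈ Finset.range M0, |T x i| :=
          Finset.sum_nonneg fun i _ => abs_nonneg _
        simp only [hCdef]
        linarith
    funext n
    have key : ∀ m, n ≤ m →
        |T x n - μ n| ≤ N (x - fun i => ∑ j ∈ Finset.range (m+1), μ j * b j i) := by
      intro m hm
      have hbdd : BddAbove (Set.range fun k =>
          |T (x - fun i => ∑ j ∈ Finset.range (m+1), μ j * b j i) k|) := by
        refine ⟨C + ∑ j ∈ Finset.range (m+1), |μ j|, ?_⟩
        rintro y ⟨k, rfl⟩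
        dsimp only
        rw [hlin μ m k, sub_eq_add_neg]
        refine (abs_add_le _ _).trans ?_
        rw [abs_neg]
        have h2 : |if k ≤ m then μ k else 0| ≤ ∑ j ∈ Finset.range (m+1), |μ j| := by
          split_ifs with h
          · exact Finset.single_le_sum (f := fun j => |μ j|) (fun i _ => abs_nonneg _)
              (Finset.mem_range.mpr (by omega))
          · rw [abs_zero]
            exact Finset.sum_nonneg fun i _ => abs_nonneg _
        have h4 := hC k
        linarith
      have h3 : |T x n - μ n|
          = |T (x - fun i => ∑ j ∈ Finset.range (m+1), μ j * b j i) n| := by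
        rw [hlin μ m n, if_pos hm]
      rw [h3, hN_def]
      exact le_ciSup hbdd n
    have h0 : |T x n - μ n| ≤ 0 :=
      ge_of_tendsto hμ (Filter.eventually_atTop.mpr ⟨n, key⟩)
    have h1 := abs_nonpos_iff.mp h0
    linarith [sub_eq_zero.mp h1]
end

section
/- Let A = (a_{nk}) be an infinite real matrix. Then A maps ℓ∞ into c₀ (i.e., for every bounded sequence x, ∑_k a_{nk} x_k converges for each n and tends to 0 as n → ∞) if and only if lim_{n→∞} ∑_{k=0}^{∞} |a_{nk}| = 0. -/
open Filter Finset

lemma mul_sign_eq_abs' (t : ℝ) : t * Real.sign t = |t| := by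
  rcases lt_trichotomy t 0 with h | h | h
  · rw [Real.sign_of_neg h, abs_of_neg h]; ring
  · simp [h]
  · rw [Real.sign_of_pos h, abs_of_pos h]; ring

lemma abs_sign_le_one' (t : ℝ) : |Real.sign t| ≤ 1 := by
  rcases Real.sign_apply_eq t with h | h | h <;> rw [h] <;> norm_num


/-- `A ∈ (ℓ∞, c₀)` iff `lim_n ∑_k |a_{nk}| = 0`. -/
theorem stmt_10 (a : ℕ → ℕ → ℝ) :
    (∀ x : ℕ → ℝ, (∃ C, ∀ k, |x k| ≤ C) →
      (∀ n, Summable fun k => a n k * x k) ∧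
      Filter.Tendsto (fun n => ∑' k, a n k * x k) Filter.atTop (nhds 0)) ↔
    ((∀ n, Summable fun k => |a n k|) ∧
      Filter.Tendsto (fun n => ∑' k, |a n k|) Filter.atTop (nhds 0)) := by
  constructor
  · intro H
    have hs : ∀ n, Summable fun k => |a n k| := by
      intro n
      have := (H (fun k => Real.sign (a n k)) ⟨1, fun k => abs_sign_le_one' _⟩).1 n
      simpa [mul_sign_eq_abs'] using this
    refine ⟨hs, ?_⟩
    -- columns tend to 0
    have hc : ∀ k0, Tendsto (fun n => a n k0) atTop (nhds 0) := by
      intro k0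
      have hb : ∃ C, ∀ k, |(if k = k0 then (1:ℝ) else 0)| ≤ C := by
        refine ⟨1, fun k => ?_⟩; split <;> simp
      have h2 := (H (fun k => if k = k0 then (1:ℝ) else 0) hb).2
      have heq : ∀ n, (∑' k, a n k * if k = k0 then (1:ℝ) else 0) = a n k0 := by
        intro n
        have : (fun k => a n k * if k = k0 then (1:ℝ) else 0)
            = fun k => if k = k0 then a n k0 else 0 := by
          funext k; split <;> simp_all
        rw [this, tsum_ite_eq k0 (fun _ => a n k0)]
      have heq2 : (fun n => ∑' k, a n k * if k = k0 then (1:ℝ) else 0) = fun n => a n k0 :=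
        funext heq
      rwa [heq2] at h2
    by_contra hT
    rw [Metric.tendsto_atTop] at hT
    push_neg at hT
    obtain ⟨ε, hε, hfreq⟩ := hT
    have hfreq' : ∀ N, ∃ n ≥ N, ε ≤ ∑' k, |a n k| := by
      intro N
      obtain ⟨n, hn, hd⟩ := hfreq N
      refine ⟨n, hn, ?_⟩
      rw [Real.dist_eq, sub_zero, abs_of_nonneg (tsum_nonneg fun k => abs_nonneg _)] at hd
      exact hd
    have hhead : ∀ m : ℕ, ∃ N, ∀ n ≥ N, ∑ k ∈ Finset.range m, |a n k| ≤ ε/8 := by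
      intro m
      have h0 : Tendsto (fun n => ∑ k ∈ Finset.range m, |a n k|) atTop (nhds 0) := by
        have := tendsto_finset_sum (Finset.range m)
          (fun k _ => ((hc k).abs : Tendsto (fun n => |a n k|) atTop (nhds |0|)))
        simpa using this
      obtain ⟨N, hN⟩ := Metric.tendsto_atTop.mp h0 (ε/8) (by positivity)
      refine ⟨N, fun n hn => ?_⟩
      have := hN n hn
      rw [Real.dist_eq, sub_zero] at this
      exact (le_abs_self _).trans this.le
    have htail : ∀ n : ℕ, ∃ m : ℕ, ∀ m' ≥ m, ∑' k, |a n (k + m')| ≤ ε/8 := by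
      intro n
      have h0 := tendsto_sum_nat_add (fun k => |a n k|)
      obtain ⟨N, hN⟩ := Metric.tendsto_atTop.mp h0 (ε/8) (by positivity)
      refine ⟨N, fun m' hm' => ?_⟩
      have := hN m' hm'
      rw [Real.dist_eq, sub_zero] at this
      exact (le_abs_self _).trans this.le
    -- recursive construction
    have hstep : ∀ p : ℕ × ℕ, ∃ q : ℕ × ℕ,
        p.1 < q.1 ∧ p.2 < q.2 ∧ ε ≤ ∑' k, |a q.1 k| ∧
        (∑ k ∈ Finset.range (p.2 + 1), |a q.1 k| ≤ ε/8) ∧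
        (∑' k, |a q.1 (k + (q.2 + 1))| ≤ ε/8) := by
      rintro ⟨n0, K0⟩
      obtain ⟨N, hN⟩ := hhead (K0 + 1)
      obtain ⟨n1, hn1ge, hn1⟩ := hfreq' (max N (n0+1))
      obtain ⟨m, hm⟩ := htail n1
      refine ⟨(n1, max m (K0+1)), ?_, ?_, hn1, ?_, ?_⟩
      · exact lt_of_lt_of_le (Nat.lt_succ_self n0) (le_trans (le_max_right _ _) hn1ge)
      · exact lt_of_lt_of_le (Nat.lt_succ_self K0) (le_max_right _ _)
      · exact hN n1 (le_trans (le_max_left _ _) hn1ge)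
      · exact hm _ (le_trans (le_max_left _ _) (Nat.le_succ_of_le le_rfl))
    obtain ⟨nb, -, hrowb⟩ := hfreq' 0
    obtain ⟨mb, hmb⟩ := htail nb
    set p : ℕ → ℕ × ℕ := fun j => Nat.rec (nb, mb) (fun _ q => Classical.choose (hstep q)) j
      with hp
    set n : ℕ → ℕ := fun j => (p j).1 with hn
    set K : ℕ → ℕ := fun j => (p j).2 with hK
    have hspec : ∀ j, n j < n (j+1) ∧ K j < K (j+1) ∧ ε ≤ ∑' k, |a (n (j+1)) k| ∧
        (∑ k ∈ Finset.range (K j + 1), |a (n (j+1)) k| ≤ ε/8) ∧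
        (∑' k, |a (n (j+1)) (k + (K (j+1) + 1))| ≤ ε/8) := by
      intro j
      exact Classical.choose_spec (hstep (p j))
    have hrow : ∀ j, ε ≤ ∑' k, |a (n j) k| := by
      intro j
      cases j with
      | zero => exact hrowb
      | succ j => exact (hspec j).2.2.1
    have htailP : ∀ j, ∑' k, |a (n j) (k + (K j + 1))| ≤ ε/8 := by
      intro j
      cases j with
      | zero => exact hmb _ (Nat.le_succ_of_le le_rfl)
      | succ j => exact (hspec j).2.2.2.2
    have hheadP : ∀ j, ∑ k ∈ Finset.range (K j + 1), |a (n (j+1)) k| ≤ ε/8 :=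
      fun j => (hspec j).2.2.2.1
    have hKmono : StrictMono K := strictMono_nat_of_lt_succ fun j => (hspec j).2.1
    have hnmono : StrictMono n := strictMono_nat_of_lt_succ fun j => (hspec j).1
    have hex : ∀ k, ∃ j, k ≤ K j := fun k => ⟨k, hKmono.le_apply⟩
    set J : ℕ → ℕ := fun k => Nat.find (hex k) with hJdef
    set x : ℕ → ℝ := fun k => Real.sign (a (n (J k)) k) with hxdef
    have hxb : ∃ C, ∀ k, |x k| ≤ C := ⟨1, fun k => abs_sign_le_one' _⟩
    have hJ : ∀ j k, K j < k → k ≤ K (j+1) → J k = j + 1 := by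
      intro j k h1 h2
      have hle : J k ≤ j + 1 := Nat.find_min' (hex k) h2
      have hgt : ¬ J k ≤ j := by
        intro hle'
        have := Nat.find_spec (hex k)
        have : k ≤ K j := this.trans (hKmono.monotone hle')
        omega
      omega
    -- key estimate
    have hkey : ∀ j, ε/2 ≤ ∑' k, a (n (j+1)) k * x k := by
      intro j
      set n' := n (j+1) with hn'
      set f : ℕ → ℝ := fun k => a n' k * x k with hf
      set g : ℕ → ℝ := fun k => |a n' k| with hg
      have hfs : Summable f := (H x hxb).1 n'
      have hgs : Summable g := hs n'
      have hfg : ∀ k, |f k| ≤ g k := by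
        intro k
        rw [hf, hg, abs_mul]
        calc |a n' k| * |x k| ≤ |a n' k| * 1 :=
              mul_le_mul_of_nonneg_left (abs_sign_le_one' _) (abs_nonneg _)
        _ = |a n' k| := mul_one _
      set M := K (j+1) + 1 with hM
      have hsplitf : (∑ k ∈ Finset.range M, f k) + ∑' k, f (k + M) = ∑' k, f k :=
        Summable.sum_add_tsum_nat_add M hfs
      have hsplitg : (∑ k ∈ Finset.range M, g k) + ∑' k, g (k + M) = ∑' k, g k :=
        Summable.sum_add_tsum_nat_add M hgs
      -- tail estimate
      have htail1 : |∑' k, f (k + M)| ≤ ε/8 := by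
        have hfs' : Summable fun k => f (k + M) := (summable_nat_add_iff M).2 hfs
        have hgs' : Summable fun k => g (k + M) := (summable_nat_add_iff M).2 hgs
        have h1 : |∑' k, f (k + M)| ≤ ∑' k, |f (k + M)| := by
          simpa [Real.norm_eq_abs] using
            norm_tsum_le_tsum_norm (f := fun k => f (k + M))
              (by simpa [Real.norm_eq_abs] using hfs'.abs)
        have h2 : ∑' k, |f (k + M)| ≤ ∑' k, g (k + M) :=
          Summable.tsum_le_tsum (fun k => hfg _) hfs'.abs hgs'
        exact h1.trans (h2.trans (htailP (j+1)))
      -- finite sum splitting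
      have hK1 : K j + 1 ≤ M := by
        have := hKmono (Nat.lt_succ_self j)
        simp only [Nat.succ_eq_add_one] at this
        omega
      have hIco : (∑ k ∈ Finset.Ico (K j + 1) M, f k) = ∑ k ∈ Finset.Ico (K j + 1) M, g k := by
        apply Finset.sum_congr rfl
        intro k hk
        rw [Finset.mem_Ico] at hk
        have hJk : J k = j + 1 := hJ j k (by omega) (by omega)
        rw [hf, hxdef]
        simp only [hJk]
        rw [← hn', mul_sign_eq_abs']
      have hsplitrange : (∑ k ∈ Finset.range (K j + 1), f k) + ∑ k ∈ Finset.Ico (K j + 1) M, f k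
          = ∑ k ∈ Finset.range M, f k := by
        rw [Finset.range_eq_Ico, Finset.range_eq_Ico]
        exact Finset.sum_Ico_consecutive _ (Nat.zero_le _) hK1
      have hsplitrangeg : (∑ k ∈ Finset.range (K j + 1), g k) + ∑ k ∈ Finset.Ico (K j + 1) M, g k
          = ∑ k ∈ Finset.range M, g k := by
        rw [Finset.range_eq_Ico, Finset.range_eq_Ico]
        exact Finset.sum_Ico_consecutive _ (Nat.zero_le _) hK1
      have hheadf : |∑ k ∈ Finset.range (K j + 1), f k| ≤ ε/8 := by
        calc |∑ k ∈ Finset.range (K j + 1), f k| ≤ ∑ k ∈ Finset.range (K j + 1), |f k| :=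
              Finset.abs_sum_le_sum_abs _ _
        _ ≤ ∑ k ∈ Finset.range (K j + 1), g k := Finset.sum_le_sum fun k _ => hfg k
        _ ≤ ε/8 := hheadP j
      have hheadg : ∑ k ∈ Finset.range (K j + 1), g k ≤ ε/8 := hheadP j
      have hrangeg : ε - ε/8 ≤ ∑ k ∈ Finset.range M, g k := by
        have h1 := htailP (j+1)
        have h2 := hrow (j+1)
        rw [← hn'] at h2
        -- hsplitg : finite + tail = tsum
        have : ∑' k, g k = ∑' k, |a n' k| := rfl
        rw [this] at hsplitg
        linarith
      have habs1 : -(ε/8) ≤ ∑ k ∈ Finset.range (K j + 1), f k := neg_le_of_abs_le hheadf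
      have habs2 : -(ε/8) ≤ ∑' k, f (k + M) := neg_le_of_abs_le htail1
      have hIcog : ε - ε/8 - ε/8 ≤ ∑ k ∈ Finset.Ico (K j + 1) M, g k := by linarith
      linarith [hsplitf, hsplitrange, hIco]
    -- contradiction
    have hx2 := (H x hxb).2
    have hcomp : Tendsto (fun j => ∑' k, a (n (j+1)) k * x k) atTop (nhds 0) :=
      hx2.comp ((hnmono.tendsto_atTop).comp (tendsto_add_atTop_nat 1))
    have := ge_of_tendsto' hcomp hkey
    linarith
  · rintro ⟨hs, ht⟩
    rintro x ⟨C, hC⟩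
    have hC0 : 0 ≤ C := le_trans (abs_nonneg _) (hC 0)
    have hsx : ∀ n, Summable fun k => a n k * x k := by
      intro n
      apply Summable.of_abs
      apply Summable.of_nonneg_of_le (fun k => abs_nonneg _) (fun k => ?_) ((hs n).mul_right C)
      rw [abs_mul]
      exact mul_le_mul_of_nonneg_left (hC k) (abs_nonneg _)
    refine ⟨hsx, ?_⟩
    have key : ∀ n, |∑' k, a n k * x k| ≤ C * ∑' k, |a n k| := by
      intro n
      have habs : Summable fun k => |a n k| * |x k| := by
        simpa [abs_mul] using (hsx n).abs
      calc |∑' k, a n k * x k| ≤ ∑' k, |a n k| * |x k| := by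
            simpa [Real.norm_eq_abs] using
              norm_tsum_le_tsum_norm (f := fun k => a n k * x k)
                (by simpa [Real.norm_eq_abs, abs_mul] using (hsx n).abs)
      _ ≤ ∑' k, C * |a n k| := by
          apply Summable.tsum_le_tsum _ habs ((hs n).mul_left C)
          intro k
          rw [mul_comm C]
          exact mul_le_mul_of_nonneg_left (hC k) (abs_nonneg _)
      _ = C * ∑' k, |a n k| := tsum_mul_left
    have h2 : Tendsto (fun n => C * ∑' k, |a n k|) atTop (nhds 0) := by
      simpa using ht.const_mul C
    apply squeeze_zero_norm (fun n => by simpa [Real.norm_eq_abs] using key n) h2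
end

section
/- Let A = (a_{nk}) be an infinite real matrix. Then A maps ℓ∞ into c if and only if sup_n ∑_{k=0}^{∞} |a_{nk}| < ∞, lim_{n→∞} a_{nk} =: α_k exists for each k, and lim_{n→∞} ∑_{k=0}^{∞} |a_{nk} − α_k| = 0. -/
open Filter Finset

private noncomputable def sgn' (r : ℝ) : ℝ := if 0 ≤ r then 1 else -1

private lemma abs_sgn' (r : ℝ) : |sgn' r| ≤ 1 := by
  unfold sgn'; split <;> simp

private lemma mul_sgn' (r : ℝ) : r * sgn' r = |r| := by
  unfold sgn'
  split
  · rw [mul_one, abs_of_nonneg ‹_›]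
  · rw [mul_neg_one, abs_of_neg (by linarith [not_le.1 ‹¬ 0 ≤ r›])]

private lemma tail_tendsto {f : ℕ → ℝ} (hf : Summable fun k => |f k|) :
    Tendsto (fun K => ∑' k, |f (k + K)|) atTop (nhds 0) := by
  have h := hf.hasSum.tendsto_sum_nat
  have he : (fun K => ∑' k, |f (k + K)|)
      = fun K => (∑' k, |f k|) - ∑ i ∈ range K, |f i| := by
    funext K
    have := Summable.sum_add_tsum_nat_add (f := fun k => |f k|) K hf
    linarith
  rw [he]
  have h2 := h.const_sub (∑' k, |f k|)
  simpa using h2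

private lemma abs_tsum_le {f : ℕ → ℝ} (hf : Summable fun k => |f k|) :
    |∑' k, f k| ≤ ∑' k, |f k| := by
  have h := norm_tsum_le_tsum_norm (f := f) (by simpa using hf)
  simpa using h

set_option maxHeartbeats 1000000 in
private lemma schur_null (d : ℕ → ℕ → ℝ)
    (hsum : ∀ n, Summable fun k => |d n k|)
    (hw : ∀ x : ℕ → ℝ, (∀ k, |x k| ≤ 1) →
      Tendsto (fun n => ∑' k, d n k * x k) atTop (nhds 0)) :
    Tendsto (fun n => ∑' k, |d n k|) atTop (nhds 0) := by
  by_contra hcon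
  -- pointwise convergence to 0 of each column
  have hpt : ∀ k, Tendsto (fun n => d n k) atTop (nhds 0) := by
    intro k
    have hx : ∀ j, |(fun j => if j = k then (1:ℝ) else 0) j| ≤ 1 := by
      intro j; dsimp only; split <;> simp
    have h := hw _ hx
    have he : (fun n => ∑' j, d n j * (if j = k then (1:ℝ) else 0)) = fun n => d n k := by
      funext n
      rw [tsum_eq_single k (by intro j hj; simp [hj])]
      simp
    rwa [he] at h
  have hfreq : ∃ ε > 0, ∀ N, ∃ n ≥ N, ε ≤ ∑' k, |d n k| := by
    rw [Metric.tendsto_atTop] at hcon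
    push_neg at hcon
    obtain ⟨ε, hε, h⟩ := hcon
    refine ⟨ε, hε, fun N => ?_⟩
    obtain ⟨n, hn, hd⟩ := h N
    refine ⟨n, hn, ?_⟩
    have h0 : (0:ℝ) ≤ ∑' k, |d n k| := tsum_nonneg fun k => abs_nonneg _
    rwa [Real.dist_eq, sub_zero, abs_of_nonneg h0] at hd
  obtain ⟨ε, hε, hfreq⟩ := hfreq
  have h8 : (0:ℝ) < ε/8 := by linarith
  -- the recursive choice step
  have step : ∀ p Kc : ℕ, ∃ q : ℕ × ℕ, p < q.1 ∧ Kc < q.2 ∧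
      (∑ k ∈ range Kc, |d q.1 k|) < ε/8 ∧ ε ≤ ∑' k, |d q.1 k| ∧
      (∑' k, |d q.1 (k + q.2)|) < ε/8 := by
    intro p Kc
    have hfin : Tendsto (fun n => ∑ k ∈ range Kc, |d n k|) atTop (nhds 0) := by
      have h := tendsto_finset_sum (range Kc) (fun k _ => (hpt k).abs)
      simpa using h
    obtain ⟨N, hN⟩ := (Metric.tendsto_atTop.1 hfin) (ε/8) h8
    obtain ⟨n, hn, hbig⟩ := hfreq (max N (p+1))
    have hhead : (∑ k ∈ range Kc, |d n k|) < ε/8 := by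
      have h := hN n (le_trans (le_max_left _ _) hn)
      rwa [Real.dist_eq, sub_zero,
        abs_of_nonneg (Finset.sum_nonneg fun k _ => abs_nonneg _)] at h
    obtain ⟨K', hK'⟩ := (Metric.tendsto_atTop.1 (tail_tendsto (hsum n))) (ε/8) h8
    have htail : (∑' k, |d n (k + max K' (Kc+1))|) < ε/8 := by
      have h := hK' (max K' (Kc+1)) (le_max_left _ _)
      rwa [Real.dist_eq, sub_zero,
        abs_of_nonneg (tsum_nonneg fun k => abs_nonneg _)] at h
    exact ⟨(n, max K' (Kc+1)), by
        have := le_trans (le_max_right N (p+1)) hn; omega,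
      lt_of_lt_of_le (Nat.lt_succ_self Kc) (le_max_right _ _), hhead, hbig, htail⟩
  choose f hf1 hf2 hf3 hf4 hf5 using step
  set seq : ℕ → ℕ × ℕ := fun i => Nat.rec (f 0 0) (fun _ ih => f ih.1 ih.2) i with hseq
  set n : ℕ → ℕ := fun i => (seq i).1 with hn
  set K : ℕ → ℕ := fun i => Nat.rec 0 (fun j _ => (seq j).2) i with hK
  have hspec : ∀ i, n i < n (i+1) ∧ K i < K (i+1) ∧
      (∑ k ∈ range (K i), |d (n i) k|) < ε/8 ∧
      ε ≤ ∑' k, |d (n i) k| ∧ (∑' k, |d (n i) (k + K (i+1))|) < ε/8 := by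
    intro i
    cases i with
    | zero => exact ⟨hf1 (f 0 0).1 (f 0 0).2, hf2 0 0, hf3 0 0, hf4 0 0, hf5 0 0⟩
    | succ j =>
      exact ⟨hf1 (seq (j+1)).1 (seq (j+1)).2, hf2 (seq j).1 (seq j).2,
        hf3 (seq j).1 (seq j).2, hf4 (seq j).1 (seq j).2, hf5 (seq j).1 (seq j).2⟩
  have hKmono : StrictMono K := strictMono_nat_of_lt_succ fun i => (hspec i).2.1
  have hnmono : StrictMono n := strictMono_nat_of_lt_succ fun i => (hspec i).1
  have hK0 : K 0 = 0 := rfl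
  set B : ℕ → ℕ := fun k => Nat.findGreatest (fun i => K i ≤ k) k with hBdef
  have hB1 : ∀ k, K (B k) ≤ k := fun k =>
    Nat.findGreatest_spec (P := fun i => K i ≤ k) (Nat.zero_le k)
      (show K 0 ≤ k by rw [hK0]; exact Nat.zero_le k)
  have hB2 : ∀ k, k < K (B k + 1) := by
    intro k
    by_cases h : B k + 1 ≤ k
    · by_contra hc
      push_neg at hc
      exact Nat.findGreatest_is_greatest (P := fun i => K i ≤ k) (Nat.lt_succ_self _) h hc
    · have hBk : B k = k := le_antisymm (Nat.findGreatest_le k) (by omega)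
      have := hKmono.le_apply (x := k+1)
      rw [hBk]
      omega
  have hBuniq : ∀ i k, K i ≤ k → k < K (i+1) → B k = i := by
    intro i k h1 h2
    rcases lt_trichotomy (B k) i with h | h | h
    · exfalso
      have hm : K (B k + 1) ≤ K i := hKmono.monotone (show B k + 1 ≤ i by omega)
      have := hB2 k
      omega
    · exact h
    · exfalso
      have hm : K (i+1) ≤ K (B k) := hKmono.monotone (show i + 1 ≤ B k by omega)
      have := hB1 k
      omega
  set x : ℕ → ℝ := fun k => sgn' (d (n (B k)) k) with hxdef
  have hx : ∀ k, |x k| ≤ 1 := fun k => abs_sgn' _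
  clear_value seq n K B x
  have hlow : ∀ i, ε/2 ≤ ∑' k, d (n i) k * x k := by
    intro i
    obtain ⟨-, -, hhead, hbig, htail⟩ := hspec i
    have hb : K i ≤ K (i+1) := le_of_lt (hspec i).2.1
    have hdx_le : ∀ k, |d (n i) k * x k| ≤ |d (n i) k| := by
      intro k
      rw [abs_mul]
      calc |d (n i) k| * |x k| ≤ |d (n i) k| * 1 :=
            mul_le_mul_of_nonneg_left (hx k) (abs_nonneg _)
        _ = _ := mul_one _
    have hsabs : Summable fun k => |d (n i) k * x k| :=
      Summable.of_nonneg_of_le (fun k => abs_nonneg _) hdx_le (hsum (n i))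
    have hsx : Summable fun k => d (n i) k * x k := hsabs.of_abs
    have hsplit := Summable.sum_add_tsum_nat_add (f := fun k => d (n i) k * x k) (K (i+1)) hsx
    have hsplitabs := Summable.sum_add_tsum_nat_add (f := fun k => |d (n i) k|) (K (i+1)) (hsum (n i))
    -- tail bound
    have htsumm : Summable fun k => |d (n i) (k + K (i+1)) * x (k + K (i+1))| :=
      (summable_nat_add_iff (f := fun k => |d (n i) k * x k|) (K (i+1))).2 hsabs
    have htb : |∑' k, d (n i) (k + K (i+1)) * x (k + K (i+1))| ≤ ∑' k, |d (n i) (k + K (i+1))| := by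
      calc |∑' k, d (n i) (k + K (i+1)) * x (k + K (i+1))|
          ≤ ∑' k, |d (n i) (k + K (i+1)) * x (k + K (i+1))| :=
            abs_tsum_le ((summable_nat_add_iff (f := fun k => |d (n i) k * x k|) (K (i+1))).2 hsabs)
        _ ≤ ∑' k, |d (n i) (k + K (i+1))| :=
            Summable.tsum_le_tsum (fun k => hdx_le _) htsumm ((summable_nat_add_iff (f := fun k => |d (n i) k|) (K (i+1))).2 (hsum (n i)))
    -- head bound
    have hhb : |∑ k ∈ range (K i), d (n i) k * x k| ≤ ∑ k ∈ range (K i), |d (n i) k| := by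
      calc |∑ k ∈ range (K i), d (n i) k * x k| ≤ ∑ k ∈ range (K i), |d (n i) k * x k| :=
            Finset.abs_sum_le_sum_abs _ _
        _ ≤ _ := Finset.sum_le_sum fun k _ => hdx_le k
    -- middle equality
    have hmid : ∑ k ∈ Ico (K i) (K (i+1)), d (n i) k * x k
        = ∑ k ∈ Ico (K i) (K (i+1)), |d (n i) k| := by
      apply Finset.sum_congr rfl
      intro k hk
      rw [Finset.mem_Ico] at hk
      have hbk : B k = i := hBuniq i k hk.1 hk.2
      rw [hxdef]
      dsimp only
      rw [hbk, mul_sgn']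
    have hrange : ∑ k ∈ range (K i), d (n i) k * x k + ∑ k ∈ Ico (K i) (K (i+1)), d (n i) k * x k
        = ∑ k ∈ range (K (i+1)), d (n i) k * x k := by
      rw [Finset.range_eq_Ico, Finset.range_eq_Ico]
      exact Finset.sum_Ico_consecutive _ (Nat.zero_le _) hb
    have hrangeabs : ∑ k ∈ range (K i), |d (n i) k| + ∑ k ∈ Ico (K i) (K (i+1)), |d (n i) k|
        = ∑ k ∈ range (K (i+1)), |d (n i) k| := by
      rw [Finset.range_eq_Ico, Finset.range_eq_Ico]
      exact Finset.sum_Ico_consecutive _ (Nat.zero_le _) hb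
    beta_reduce at hsplit hsplitabs
    have ht0 : (0:ℝ) ≤ ∑' k, |d (n i) (k + K (i+1))| := tsum_nonneg fun k => abs_nonneg _
    have h1 := (abs_le.1 htb).1
    have h2 := (abs_le.1 hhb).1
    have h3 := (abs_le.1 hhb).2
    linarith [hmid, hrange, hrangeabs, hsplit, hsplitabs]
  -- contradiction
  have hconv := (hw x hx).comp hnmono.tendsto_atTop
  obtain ⟨N0, hN0⟩ := (Metric.tendsto_atTop.1 hconv) (ε/2) (by linarith)
  have h1 := hlow N0
  have h2 := hN0 N0 le_rfl
  rw [Function.comp_apply, Real.dist_eq, sub_zero] at h2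
  have h3 := le_abs_self (∑' k, d (n N0) k * x k)
  linarith

/-- `A ∈ (ℓ∞, c)` iff `sup_n ∑_k |a_{nk}| < ∞`, `α_k = lim_n a_{nk}` exists for
each `k`, and `lim_n ∑_k |a_{nk} - α_k| = 0` (Schur's characterization). -/
theorem stmt_13 (a : ℕ → ℕ → ℝ) :
    (∀ x : ℕ → ℝ, (∃ C, ∀ k, |x k| ≤ C) →
      (∀ n, Summable fun k => a n k * x k) ∧
      ∃ L, Filter.Tendsto (fun n => ∑' k, a n k * x k) Filter.atTop (nhds L)) ↔
    ((∀ n, Summable fun k => |a n k|) ∧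
      (∃ C, ∀ n, (∑' k, |a n k|) ≤ C) ∧
      ∃ α : ℕ → ℝ,
        (∀ k, Filter.Tendsto (fun n => a n k) Filter.atTop (nhds (α k))) ∧
        (∀ n, Summable fun k => |a n k - α k|) ∧
        Filter.Tendsto (fun n => ∑' k, |a n k - α k|) Filter.atTop (nhds 0)) := by
  constructor
  · intro H
    have hrow : ∀ n, Summable fun k => |a n k| := by
      intro n
      have h := (H (fun k => sgn' (a n k)) ⟨1, fun k => abs_sgn' _⟩).1 n
      have he : (fun k => a n k * sgn' (a n k)) = fun k => |a n k| := funext fun k => mul_sgn' _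
      rwa [he] at h
    have hαex : ∀ k, ∃ L, Tendsto (fun mm => a mm k) atTop (nhds L) := by
      intro k
      obtain ⟨L, hL⟩ := (H (fun j => if j = k then 1 else 0)
        ⟨1, fun j => by split <;> simp⟩).2
      refine ⟨L, ?_⟩
      have he : (fun mm => ∑' j, a mm j * (if j = k then (1:ℝ) else 0)) = fun mm => a mm k := by
        funext mm
        rw [tsum_eq_single k (by intro j hj; simp [hj])]
        simp
      rwa [he] at hL
    choose α hα using hαex
    have habsum : ∀ p q, Summable fun k => |a p k - a q k| := by
      intro p q
      exact Summable.of_nonneg_of_le (fun k => abs_nonneg _) (fun k => abs_sub _ _)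
        ((hrow p).add (hrow q))
    have hcauchy : ∀ ε : ℝ, 0 < ε → ∃ N, ∀ mm ≥ N, ∀ nn ≥ N,
        (∑' k, |a mm k - a nn k|) < ε := by
      by_contra hc
      push_neg at hc
      obtain ⟨ε, hε, hbad⟩ := hc
      choose m hm n hn hge using hbad
      set d : ℕ → ℕ → ℝ := fun j k => a (m j) k - a (n j) k with hd
      have hdsum : ∀ j, Summable fun k => |d j k| := fun j => habsum (m j) (n j)
      have hw : ∀ x : ℕ → ℝ, (∀ k, |x k| ≤ 1) →
          Tendsto (fun j => ∑' k, d j k * x k) atTop (nhds 0) := by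
        intro x hx1
        obtain ⟨hsumm, L, hL⟩ := H x ⟨1, hx1⟩
        have he : (fun j => ∑' k, d j k * x k)
            = fun j => (∑' k, a (m j) k * x k) - (∑' k, a (n j) k * x k) := by
          funext j
          rw [← Summable.tsum_sub (hsumm (m j)) (hsumm (n j))]
          congr 1
          funext k
          show (a (m j) k - a (n j) k) * x k = _
          ring
        rw [he]
        have hmT : Tendsto m atTop atTop := tendsto_atTop_mono hm tendsto_id
        have hnT : Tendsto n atTop atTop := tendsto_atTop_mono hn tendsto_id
        have h := (hL.comp hmT).sub (hL.comp hnT)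
        simpa using h
      have hnull := schur_null d hdsum hw
      obtain ⟨N, hN⟩ := (Metric.tendsto_atTop.1 hnull) ε hε
      have h1 := hge N
      have h2 := hN N le_rfl
      have h0 : (0:ℝ) ≤ ∑' k, |d N k| := tsum_nonneg fun k => abs_nonneg _
      rw [Real.dist_eq, sub_zero, abs_of_nonneg h0] at h2
      exact absurd h1 (not_le.2 h2)
    have stepA : ∀ ε : ℝ, 0 < ε → ∃ N, ∀ nn ≥ N, ∀ s : Finset ℕ,
        (∑ k ∈ s, |a nn k - α k|) ≤ ε := by
      intro ε hε
      obtain ⟨N, hN⟩ := hcauchy ε hε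
      refine ⟨N, fun nn hnn s => ?_⟩
      have hT : Tendsto (fun mm => ∑ k ∈ s, |a nn k - a mm k|) atTop
          (nhds (∑ k ∈ s, |a nn k - α k|)) := by
        apply tendsto_finset_sum
        intro k _
        exact (tendsto_const_nhds.sub (hα k)).abs
      apply le_of_tendsto hT
      filter_upwards [eventually_ge_atTop N] with mm hmm
      calc ∑ k ∈ s, |a nn k - a mm k| ≤ ∑' k, |a nn k - a mm k| :=
            Summable.sum_le_tsum s (fun k _ => abs_nonneg _) (habsum nn mm)
        _ ≤ ε := le_of_lt (hN nn hnn mm hmm)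
    have hαsum : Summable fun k => |α k| := by
      obtain ⟨N, hN⟩ := stepA 1 one_pos
      apply summable_of_sum_range_le (c := 1 + ∑' k, |a N k|) (fun k => abs_nonneg _)
      intro j
      have h1 : ∀ k, |α k| ≤ |a N k - α k| + |a N k| := by
        intro k
        have h := abs_add_le (α k - a N k) (a N k)
        simpa [abs_sub_comm] using h
      calc ∑ k ∈ range j, |α k| ≤ ∑ k ∈ range j, (|a N k - α k| + |a N k|) :=
            Finset.sum_le_sum fun k _ => h1 k
        _ = (∑ k ∈ range j, |a N k - α k|) + ∑ k ∈ range j, |a N k| := Finset.sum_add_distrib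
        _ ≤ 1 + ∑' k, |a N k| := by
            have ha := hN N le_rfl (range j)
            have hb := Summable.sum_le_tsum (range j) (fun k _ => abs_nonneg _) (hrow N)
            linarith
    have hbsum : ∀ nn, Summable fun k => |a nn k - α k| := by
      intro nn
      exact Summable.of_nonneg_of_le (fun k => abs_nonneg _) (fun k => abs_sub _ _)
        ((hrow nn).add hαsum)
    have hconv : Tendsto (fun nn => ∑' k, |a nn k - α k|) atTop (nhds 0) := by
      rw [Metric.tendsto_atTop]
      intro ε hε
      obtain ⟨N, hN⟩ := stepA (ε/2) (by linarith)
      refine ⟨N, fun nn hnn => ?_⟩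
      have hle : (∑' k, |a nn k - α k|) ≤ ε/2 :=
        Summable.tsum_le_of_sum_le (hbsum nn) (fun s => hN nn hnn s)
      have h0 : (0:ℝ) ≤ ∑' k, |a nn k - α k| := tsum_nonneg fun k => abs_nonneg _
      rw [Real.dist_eq, sub_zero, abs_of_nonneg h0]
      linarith
    have hCb : ∃ C, ∀ nn, (∑' k, |a nn k|) ≤ C := by
      obtain ⟨N, hN⟩ := (Metric.tendsto_atTop.1 hconv) 1 one_pos
      refine ⟨1 + (∑ j ∈ range N, ∑' k, |a j k - α k|) + ∑' k, |α k|, fun nn => ?_⟩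
      have h1 : (∑' k, |a nn k|) ≤ (∑' k, |a nn k - α k|) + ∑' k, |α k| := by
        have hle : ∀ k, |a nn k| ≤ |a nn k - α k| + |α k| := by
          intro k
          have h := abs_add_le (a nn k - α k) (α k)
          simpa using h
        calc (∑' k, |a nn k|) ≤ ∑' k, (|a nn k - α k| + |α k|) :=
              Summable.tsum_le_tsum hle (hrow nn) ((hbsum nn).add hαsum)
          _ = _ := Summable.tsum_add (hbsum nn) hαsum
      have h2 : (∑' k, |a nn k - α k|) ≤ 1 + ∑ j ∈ range N, ∑' k, |a j k - α k| := by
        rcases le_or_gt N nn with h | h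
        · have hd := hN nn h
          rw [Real.dist_eq, sub_zero, abs_of_nonneg (tsum_nonneg fun k => abs_nonneg _)] at hd
          have hs : (0:ℝ) ≤ ∑ j ∈ range N, ∑' k, |a j k - α k| :=
            Finset.sum_nonneg fun j _ => tsum_nonneg fun k => abs_nonneg _
          linarith
        · have hmem : nn ∈ range N := Finset.mem_range.2 h
          have hf := Finset.single_le_sum (f := fun j => ∑' k, |a j k - α k|)
            (fun j _ => tsum_nonneg fun k => abs_nonneg _) hmem
          linarith
      linarith
    exact ⟨hrow, hCb, α, hα, hbsum, hconv⟩
  · rintro ⟨hrow, ⟨C, hC⟩, α, hα, hbsum, hconv⟩ x ⟨Cx, hx⟩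
    have hCx0 : (0:ℝ) ≤ Cx := le_trans (abs_nonneg (x 0)) (hx 0)
    have habs : ∀ nn, Summable fun k => |a nn k * x k| := by
      intro nn
      apply Summable.of_nonneg_of_le (fun k => abs_nonneg _) (fun k => ?_)
        ((hrow nn).mul_right Cx)
      rw [abs_mul]
      exact mul_le_mul_of_nonneg_left (hx k) (abs_nonneg _)
    have hsumm : ∀ nn, Summable fun k => a nn k * x k := fun nn => (habs nn).of_abs
    have hαabs : Summable fun k => |α k| := by
      apply Summable.of_nonneg_of_le (fun k => abs_nonneg _) (fun k => ?_)
        ((hbsum 0).add (hrow 0))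
      have h := abs_add_le (α k - a 0 k) (a 0 k)
      simpa [abs_sub_comm] using h
    have hαx : Summable fun k => α k * x k := by
      apply Summable.of_abs
      apply Summable.of_nonneg_of_le (fun k => abs_nonneg _) (fun k => ?_) (hαabs.mul_right Cx)
      rw [abs_mul]
      exact mul_le_mul_of_nonneg_left (hx k) (abs_nonneg _)
    refine ⟨hsumm, ∑' k, α k * x k, ?_⟩
    rw [← tendsto_sub_nhds_zero_iff]
    apply squeeze_zero_norm (a := fun nn => (∑' k, |a nn k - α k|) * Cx)
    · intro nn
      have he : (∑' k, a nn k * x k) - (∑' k, α k * x k) = ∑' k, (a nn k - α k) * x k := by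
        rw [← Summable.tsum_sub (hsumm nn) hαx]
        congr 1
        funext k
        ring
      have hs1 : Summable fun k => |(a nn k - α k) * x k| := by
        apply Summable.of_nonneg_of_le (fun k => abs_nonneg _) (fun k => ?_)
          ((hbsum nn).mul_right Cx)
        rw [abs_mul]
        exact mul_le_mul_of_nonneg_left (hx k) (abs_nonneg _)
      rw [Real.norm_eq_abs, he]
      calc |∑' k, (a nn k - α k) * x k| ≤ ∑' k, |(a nn k - α k) * x k| := abs_tsum_le hs1
        _ ≤ ∑' k, |a nn k - α k| * Cx := Summable.tsum_le_tsum (fun k => by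
              rw [abs_mul]
              exact mul_le_mul_of_nonneg_left (hx k) (abs_nonneg _)) hs1
              ((hbsum nn).mul_right Cx)
        _ = (∑' k, |a nn k - α k|) * Cx := tsum_mul_right
    · simpa using hconv.mul_const Cx
end

section
/- Let A = (a_{nk}) be an infinite real matrix. Then A maps c₀ into ℓ₁ (i.e., for every null sequence x, ∑_k a_{nk} x_k converges for each n and ∑_n |∑_k a_{nk} x_k| < ∞) if and only if sup over all nonempty finite sets K ⊂ ℕ of ∑_{n=0}^{∞} |∑_{k∈K} a_{nk}| is finite. -/
open Filter Finset ZeroAtInftyContinuousMap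

lemma sgnSplit (b : ℕ → ℝ) (K : Finset ℕ) (C : ℝ)
    (h : ∀ K' : Finset ℕ, K' ⊆ K → |∑ k ∈ K', b k| ≤ C) :
    ∑ k ∈ K, |b k| ≤ 2 * C := by
  have h1 := h (K.filter (fun k => 0 ≤ b k)) (filter_subset _ _)
  have h2 := h (K.filter (fun k => ¬ 0 ≤ b k)) (filter_subset _ _)
  have e : ∑ k ∈ K, |b k| = (∑ k ∈ K.filter (fun k => 0 ≤ b k), b k)
      - ∑ k ∈ K.filter (fun k => ¬ 0 ≤ b k), b k := by
    rw [← Finset.sum_filter_add_sum_filter_not K (fun k => 0 ≤ b k) (fun k => |b k|)]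
    rw [Finset.sum_congr rfl (fun k hk => abs_of_nonneg (Finset.mem_filter.mp hk).2),
      Finset.sum_congr rfl (fun k hk => abs_of_neg (lt_of_not_ge (Finset.mem_filter.mp hk).2)),
      Finset.sum_neg_distrib]
    ring
  rw [e]
  have := abs_le.mp h1
  have := abs_le.mp h2
  linarith [this.1, this.2]

lemma rowAbsSummable (c : ℕ → ℝ)
    (h : ∀ x : ℕ → ℝ, Tendsto x atTop (nhds 0) → Summable fun k => c k * x k) :
    Summable fun k => |c k| := by
  by_contra hns
  set P : ℕ → ℝ := fun k => 1 + ∑ j ∈ range k, |c j| with hPdef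
  have hP1 : ∀ k, (1:ℝ) ≤ P k := fun k =>
    le_add_of_nonneg_right (Finset.sum_nonneg fun j _ => abs_nonneg _)
  have hP0 : ∀ k, (0:ℝ) < P k := fun k => lt_of_lt_of_le one_pos (hP1 k)
  have htop : Tendsto P atTop atTop := by
    have := (not_summable_iff_tendsto_nat_atTop_of_nonneg (fun k => abs_nonneg (c k))).mp hns
    simpa [hPdef] using tendsto_atTop_add_const_left atTop 1 this
  set x : ℕ → ℝ := fun k => (if 0 ≤ c k then 1 else -1) / P k with hxdef
  have hx : Tendsto x atTop (nhds 0) := by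
    refine squeeze_zero_norm (a := fun k => (P k)⁻¹) (fun k => ?_)
      (tendsto_inv_atTop_zero.comp htop)
    have h1 : |x k| = 1 / P k := by
      rw [hxdef]; simp only [abs_div, abs_of_pos (hP0 k)]
      split <;> simp
    simp [Real.norm_eq_abs, h1, one_div]
  have hsum := h x hx
  have hval : ∀ k, c k * x k = |c k| / P k := by
    intro k
    rw [hxdef]
    simp only
    split
    · rw [abs_of_nonneg ‹_›]; ring
    · rw [abs_of_neg (lt_of_not_ge ‹_›)]; ring
  have hnn : ∀ k, 0 ≤ c k * x k := fun k => by
    rw [hval k]; positivity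
  have key : ∀ k, Real.log (P (k+1)) - Real.log (P k) ≤ c k * x k := by
    intro k
    rw [hval k]
    have hPk1 : P (k+1) = P k + |c k| := by
      simp [hPdef, Finset.sum_range_succ]; ring
    have h0 : (0:ℝ) < P (k+1) / P k := div_pos (hP0 _) (hP0 _)
    have := Real.log_le_sub_one_of_pos h0
    rw [Real.log_div (ne_of_gt (hP0 _)) (ne_of_gt (hP0 _))] at this
    have : Real.log (P (k+1)) - Real.log (P k) ≤ (P (k+1) - P k) / P k := by
      rw [sub_div] at *
      have hdp : P (k+1) / P k - P k / P k = P (k+1)/ P k - 1 := by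
        rw [div_self (ne_of_gt (hP0 k))]
      linarith [this, hdp.le]
    calc Real.log (P (k+1)) - Real.log (P k) ≤ (P (k+1) - P k) / P k := this
      _ = |c k| / P k := by rw [hPk1]; ring_nf
  have hbig : Tendsto (fun N => ∑ k ∈ range N, c k * x k) atTop atTop := by
    apply tendsto_atTop_mono (f := fun N => Real.log (P N) - Real.log (P 0))
    · intro N
      rw [← Finset.sum_range_sub (fun k => Real.log (P k)) N]
      exact Finset.sum_le_sum fun k _ => key k
    · have : Tendsto (fun N => Real.log (P N)) atTop atTop :=
        Real.tendsto_log_atTop.comp htop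
      simpa [sub_eq_add_neg] using tendsto_atTop_add_const_right atTop (-(Real.log (P 0))) this
  exact (not_summable_iff_tendsto_nat_atTop_of_nonneg hnn).mpr hbig hsum

lemma bcfBound (g : ZeroAtInftyContinuousMap ℕ ℝ) (k : ℕ) : |g k| ≤ ‖g‖ := by
  have := g.toBCF.norm_coe_le_norm k
  simpa [norm_toBCF_eq_norm] using this

lemma rowSummableBCF (c : ℕ → ℝ) (hc : Summable fun k => |c k|)
    (g : ZeroAtInftyContinuousMap ℕ ℝ) : Summable fun k => c k * g k := by
  apply Summable.of_abs
  refine Summable.of_nonneg_of_le (fun k => abs_nonneg _) (fun k => ?_) (hc.mul_right ‖g‖)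
  rw [abs_mul]
  exact mul_le_mul_of_nonneg_left (bcfBound g k) (abs_nonneg _)

lemma rowBound (c : ℕ → ℝ) (hc : Summable fun k => |c k|)
    (g : ZeroAtInftyContinuousMap ℕ ℝ) :
    |∑' k, c k * g k| ≤ (∑' k, |c k|) * ‖g‖ := by
  have hs : Summable fun k => |c k| * |g k| := by
    simpa [abs_mul] using (rowSummableBCF c hc g).abs
  calc |∑' k, c k * g k| ≤ ∑' k, |c k| * |g k| := by
        simpa using norm_tsum_le_tsum_norm (f := fun k => c k * g k)
          (by simpa [Real.norm_eq_abs, abs_mul] using hs)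
    _ ≤ ∑' k, |c k| * ‖g‖ := by
        refine Summable.tsum_le_tsum (fun k => ?_) hs (hc.mul_right ‖g‖)
        exact mul_le_mul_of_nonneg_left (bcfBound g k) (abs_nonneg _)
    _ = (∑' k, |c k|) * ‖g‖ := tsum_mul_right

noncomputable def rowFunc (c : ℕ → ℝ) (hc : Summable fun k => |c k|) :
    ZeroAtInftyContinuousMap ℕ ℝ →L[ℝ] ℝ :=
  LinearMap.mkContinuous
    { toFun := fun g => ∑' k, c k * g k
      map_add' := by
        intro g h
        simp only [ZeroAtInftyContinuousMap.coe_add, Pi.add_apply, mul_add]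
        exact Summable.tsum_add (rowSummableBCF c hc g) (rowSummableBCF c hc h)
      map_smul' := by
        intro r g
        simp only [ZeroAtInftyContinuousMap.coe_smul, Pi.smul_apply, smul_eq_mul,
          RingHom.id_apply]
        rw [← tsum_mul_left]
        congr 1; ext k; ring }
    (∑' k, |c k|)
    (fun g => by simpa [Real.norm_eq_abs] using rowBound c hc g)

@[simp] lemma rowFunc_apply (c : ℕ → ℝ) (hc : Summable fun k => |c k|)
    (g : ZeroAtInftyContinuousMap ℕ ℝ) : rowFunc c hc g = ∑' k, c k * g k := rfl


noncomputable def indK (K : Finset ℕ) : ZeroAtInftyContinuousMap ℕ ℝ :=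
  ⟨⟨fun k => if k ∈ K then 1 else 0, continuous_of_discreteTopology⟩, by
    rw [cocompact_eq_atTop]
    apply tendsto_nhds_of_eventually_eq
    filter_upwards [eventually_ge_atTop (K.sup id + 1)] with k hk
    have : k ∉ K := fun hmem => by
      have := Finset.le_sup (f := id) hmem
      simp only [id] at this; omega
    simp [this]⟩

@[simp] lemma indK_apply (K : Finset ℕ) (k : ℕ) :
    indK K k = if k ∈ K then 1 else 0 := rfl

lemma indK_norm (K : Finset ℕ) : ‖indK K‖ ≤ 1 := by
  rw [← norm_toBCF_eq_norm]
  refine (BoundedContinuousFunction.norm_le zero_le_one).mpr fun k => ?_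
  show ‖indK K k‖ ≤ 1
  rw [indK_apply]
  split <;> simp

lemma forwardDir (a : ℕ → ℕ → ℝ)
    (h : ∀ x : ℕ → ℝ, Tendsto x atTop (nhds 0) →
      (∀ n, Summable fun k => a n k * x k) ∧
      Summable fun n => |∑' k, a n k * x k|) :
    ∃ C, ∀ K : Finset ℕ, K.Nonempty →
      ∀ N : ℕ, ∑ n ∈ Finset.range N, |∑ k ∈ K, a n k| ≤ C := by
  have hrow : ∀ n, Summable fun k => |a n k| := fun n =>
    rowAbsSummable (a n) (fun x hx => (h x hx).1 n)
  set f : ℕ → (ZeroAtInftyContinuousMap ℕ ℝ →L[ℝ] ℝ) :=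
    fun n => rowFunc (a n) (hrow n) with hf
  set G : ℕ × (ℕ → Bool) → (ZeroAtInftyContinuousMap ℕ ℝ →L[ℝ] ℝ) :=
    fun p => ∑ n ∈ range p.1, (if p.2 n then (1:ℝ) else -1) • f n with hG
  have hpt : ∀ g, ∃ C, ∀ p, ‖G p g‖ ≤ C := by
    intro g
    have hxg : Tendsto (⇑g) atTop (nhds 0) := by
      have := g.zero_at_infty'; rwa [cocompact_eq_atTop] at this
    refine ⟨∑' n, |∑' k, a n k * g k|, fun p => ?_⟩
    have h2 := (h (⇑g) hxg).2
    have e : G p g = ∑ n ∈ range p.1,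
        (if p.2 n then (1:ℝ) else -1) * (∑' k, a n k * g k) := by
      simp only [hG, ContinuousLinearMap.sum_apply, ContinuousLinearMap.smul_apply,
        smul_eq_mul]
      exact Finset.sum_congr rfl fun n _ => by rw [hf]; simp
    rw [Real.norm_eq_abs, e]
    calc |∑ n ∈ range p.1, (if p.2 n then (1:ℝ) else -1) * (∑' k, a n k * g k)|
        ≤ ∑ n ∈ range p.1, |(if p.2 n then (1:ℝ) else -1) * (∑' k, a n k * g k)| :=
          Finset.abs_sum_le_sum_abs _ _
      _ = ∑ n ∈ range p.1, |∑' k, a n k * g k| :=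
          Finset.sum_congr rfl fun n _ => by split <;> simp [abs_mul]
      _ ≤ ∑' n, |∑' k, a n k * g k| :=
          Summable.sum_le_tsum _ (fun n _ => abs_nonneg _) h2
  obtain ⟨C, hC⟩ := banach_steinhaus hpt
  refine ⟨C, fun K _ N => ?_⟩
  set g := indK K with hg
  set p : ℕ × (ℕ → Bool) := (N, fun n => decide (0 ≤ ∑ k ∈ K, a n k)) with hp
  have happ : ∀ n, f n g = ∑ k ∈ K, a n k := by
    intro n
    rw [hf]
    simp only [rowFunc_apply]
    rw [tsum_eq_sum (s := K) (fun k hk => by simp [hg, hk])]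
    exact Finset.sum_congr rfl fun k hk => by simp [hg, hk]
  have e : G p g = ∑ n ∈ range N, |∑ k ∈ K, a n k| := by
    simp only [hG, ContinuousLinearMap.sum_apply, ContinuousLinearMap.smul_apply,
      smul_eq_mul]
    refine Finset.sum_congr rfl fun n _ => ?_
    rw [happ n]
    by_cases h0 : 0 ≤ ∑ k ∈ K, a n k
    · simp [hp, h0, abs_of_nonneg h0]
    · simp [hp, h0, abs_of_neg (lt_of_not_ge h0)]
  calc ∑ n ∈ range N, |∑ k ∈ K, a n k| = G p g := e.symm
    _ ≤ |G p g| := le_abs_self _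
    _ = ‖G p g‖ := (Real.norm_eq_abs _).symm
    _ ≤ ‖G p‖ * ‖g‖ := (G p).le_opNorm g
    _ ≤ C * 1 :=
        mul_le_mul (hC p) (indK_norm K) (norm_nonneg _)
          (le_trans (norm_nonneg _) (hC p))
    _ = C := mul_one C
lemma backwardDir (a : ℕ → ℕ → ℝ) (C : ℝ)
    (hC : ∀ K : Finset ℕ, K.Nonempty →
      ∀ N : ℕ, ∑ n ∈ Finset.range N, |∑ k ∈ K, a n k| ≤ C)
    (x : ℕ → ℝ) (hx : Tendsto x atTop (nhds 0)) :
    (∀ n, Summable fun k => a n k * x k) ∧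
    Summable fun n => |∑' k, a n k * x k| := by
  have hC0 : (0:ℝ) ≤ C := by simpa using hC {0} ⟨0, Finset.mem_singleton_self 0⟩ 0
  have hCK : ∀ (K : Finset ℕ) (N : ℕ), ∑ n ∈ range N, |∑ k ∈ K, a n k| ≤ C := by
    intro K N
    rcases K.eq_empty_or_nonempty with rfl | hne
    · simpa using hC0
    · exact hC K hne N
  have hone : ∀ n (K : Finset ℕ), |∑ k ∈ K, a n k| ≤ C := by
    intro n K
    have h1 := hCK K (n + 1)
    have h2 : |∑ k ∈ K, a n k| ≤ ∑ m ∈ range (n+1), |∑ k ∈ K, a m k| :=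
      Finset.single_le_sum (f := fun m => |∑ k ∈ K, a m k|)
        (fun m _ => abs_nonneg _) (Finset.self_mem_range_succ n)
    linarith
  have habs : ∀ n (K : Finset ℕ), ∑ k ∈ K, |a n k| ≤ 2 * C := fun n K =>
    sgnSplit (a n) K C (fun K' _ => hone n K')
  have hrow : ∀ n, Summable fun k => |a n k| := fun n =>
    summable_of_sum_range_le (fun k => abs_nonneg _) (fun m => habs n (range m))
  -- bound for x
  obtain ⟨N0, hN0⟩ : ∃ N0, ∀ k ≥ N0, |x k| ≤ 1 := by
    have := Metric.tendsto_atTop.mp hx 1 one_pos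
    obtain ⟨N0, hN0⟩ := this
    exact ⟨N0, fun k hk => by
      have := hN0 k hk
      rw [Real.dist_eq, sub_zero] at this
      linarith⟩
  set M : ℝ := 1 + ∑ k ∈ range N0, |x k| with hM
  have hM0 : 0 ≤ M := by positivity
  have hMb : ∀ k, |x k| ≤ M := by
    intro k
    rcases lt_or_ge k N0 with hk | hk
    · have : |x k| ≤ ∑ j ∈ range N0, |x j| :=
        Finset.single_le_sum (f := fun j => |x j|) (fun j _ => abs_nonneg _)
          (Finset.mem_range.mpr hk)
      simp only [hM]; linarith
    · have h1 := hN0 k hk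
      have h2 : (0:ℝ) ≤ ∑ j ∈ range N0, |x j| := Finset.sum_nonneg fun j _ => abs_nonneg _
      simp only [hM]; linarith
  have hsumrow : ∀ n, Summable fun k => a n k * x k := by
    intro n
    apply Summable.of_abs
    refine Summable.of_nonneg_of_le (fun k => abs_nonneg _) (fun k => ?_)
      ((hrow n).mul_right M)
    rw [abs_mul]
    exact mul_le_mul_of_nonneg_left (hMb k) (abs_nonneg _)
  refine ⟨hsumrow, ?_⟩
  -- key uniform bound on finite truncations
  have key : ∀ N m : ℕ, ∑ n ∈ range N, |∑ k ∈ range m, a n k * x k| ≤ 2 * C * M := by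
    intro N m
    set K := range m with hK
    set ε : ℕ → ℝ := fun n => if 0 ≤ ∑ k ∈ K, a n k * x k then 1 else -1 with hε
    set b : ℕ → ℝ := fun k => ∑ n ∈ range N, ε n * a n k with hb
    have hbK : ∀ K' : Finset ℕ, K' ⊆ K → |∑ k ∈ K', b k| ≤ C := by
      intro K' _
      have swap : ∑ k ∈ K', b k = ∑ n ∈ range N, ε n * ∑ k ∈ K', a n k := by
        rw [hb]
        simp only
        rw [Finset.sum_comm]
        exact Finset.sum_congr rfl fun n _ => by rw [Finset.mul_sum]
      rw [swap]
      calc |∑ n ∈ range N, ε n * ∑ k ∈ K', a n k|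
          ≤ ∑ n ∈ range N, |ε n * ∑ k ∈ K', a n k| := Finset.abs_sum_le_sum_abs _ _
        _ = ∑ n ∈ range N, |∑ k ∈ K', a n k| := by
            refine Finset.sum_congr rfl fun n _ => ?_
            rw [abs_mul]
            have : |ε n| = 1 := by rw [hε]; simp only; split <;> simp
            rw [this, one_mul]
        _ ≤ C := hCK K' N
    have hbsum : ∑ k ∈ K, |b k| ≤ 2 * C := sgnSplit b K C hbK
    have e1 : ∑ n ∈ range N, |∑ k ∈ K, a n k * x k|
        = ∑ n ∈ range N, ε n * ∑ k ∈ K, a n k * x k := by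
      refine Finset.sum_congr rfl fun n _ => ?_
      rw [hε]
      simp only
      split
      · rw [abs_of_nonneg ‹_›, one_mul]
      · rw [abs_of_neg (lt_of_not_ge ‹_›)]; ring
    have e2 : ∑ n ∈ range N, ε n * ∑ k ∈ K, a n k * x k = ∑ k ∈ K, b k * x k := by
      have h1 : ∀ n ∈ range N, ε n * ∑ k ∈ K, a n k * x k
          = ∑ k ∈ K, ε n * (a n k * x k) := fun n _ => Finset.mul_sum _ _ _
      rw [Finset.sum_congr rfl h1, Finset.sum_comm]
      refine Finset.sum_congr rfl fun k _ => ?_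
      rw [hb]; simp only [Finset.sum_mul]
      exact Finset.sum_congr rfl fun n _ => by ring
    rw [e1, e2]
    calc ∑ k ∈ K, b k * x k ≤ ∑ k ∈ K, |b k * x k| :=
          Finset.sum_le_sum fun k _ => le_abs_self _
      _ ≤ ∑ k ∈ K, |b k| * M := by
          refine Finset.sum_le_sum fun k _ => ?_
          rw [abs_mul]
          exact mul_le_mul_of_nonneg_left (hMb k) (abs_nonneg _)
      _ = (∑ k ∈ K, |b k|) * M := (Finset.sum_mul _ _ _).symm
      _ ≤ 2 * C * M := mul_le_mul_of_nonneg_right hbsum hM0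
  -- pass to the limit in m
  have keyN : ∀ N : ℕ, ∑ n ∈ range N, |∑' k, a n k * x k| ≤ 2 * C * M := by
    intro N
    have hlim : Tendsto (fun m => ∑ n ∈ range N, |∑ k ∈ range m, a n k * x k|)
        atTop (nhds (∑ n ∈ range N, |∑' k, a n k * x k|)) := by
      refine tendsto_finset_sum _ fun n _ => ?_
      exact ((hsumrow n).hasSum.tendsto_sum_nat).abs
    exact le_of_tendsto hlim (Filter.Eventually.of_forall fun m => key N m)
  exact summable_of_sum_range_le (fun n => abs_nonneg _) keyN

/-- `A ∈ (c₀, ℓ₁)` iff `sup_{K finite nonempty} ∑_n |∑_{k ∈ K} a_{nk}| < ∞`. -/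
theorem stmt_14 (a : ℕ → ℕ → ℝ) :
    (∀ x : ℕ → ℝ, Filter.Tendsto x Filter.atTop (nhds 0) →
      (∀ n, Summable fun k => a n k * x k) ∧
      Summable fun n => |∑' k, a n k * x k|) ↔
    (∃ C, ∀ K : Finset ℕ, K.Nonempty →
      ∀ N : ℕ, ∑ n ∈ Finset.range N, |∑ k ∈ K, a n k| ≤ C) := by
  constructor
  · exact fun h => forwardDir a h
  · rintro ⟨C, hC⟩ x hx
    exact backwardDir a C hC x hx
end

section
/- Let r, t be sequences of nonzero reals, s with s₀ ≠ 0, and let (D_k) be the reciprocal coefficients of s. A sequence a = (a_n) belongs to the α-dual of ℓ∞(r,s,t;Δ) (i.e., (a_n x_n) ∈ ℓ₁ for every x ∈ ℓ∞(r,s,t;Δ)) if and only if sup over nonempty finite sets K ⊂ ℕ of ∑_{n} |∑_{j∈K} ∑_{k=0}^{n−j} (−1)^k (D_k / t_{k+j}) r_j a_n| is finite (terms with j > n interpreted as 0). -/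
set_option maxHeartbeats 1000000

namespace Stmt15Aux


/-- triangle sum swap -/
lemma tri_swap (F : ℕ → ℕ → ℝ) (n : ℕ) :
    ∑ m ∈ Finset.range (n+1), ∑ i ∈ Finset.range (m+1), F m i
      = ∑ j ∈ Finset.range (n+1), ∑ k ∈ Finset.range (n-j+1), F (j+k) j := by
  induction n with
  | zero => simp
  | succ n ih =>
    rw [Finset.sum_range_succ, ih]
    rw [Finset.sum_range_succ (fun j => ∑ k ∈ Finset.range (n+1-j+1), F (j+k) j)]
    have h1 : ∀ j ∈ Finset.range (n+1), ∑ k ∈ Finset.range (n+1-j+1), F (j+k) j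
        = ∑ k ∈ Finset.range (n-j+1), F (j+k) j + F (n+1) j := by
      intro j hj
      have hj' : j ≤ n := by simpa [Nat.lt_succ_iff] using hj
      have : n + 1 - j + 1 = (n - j + 1) + 1 := by omega
      rw [this, Finset.sum_range_succ]
      congr 2
      omega
    rw [Finset.sum_congr rfl h1, Finset.sum_add_distrib]
    have h2 : n + 1 - (n+1) + 1 = 1 := by omega
    rw [h2]
    simp [Finset.sum_range_succ]
    ring

lemma telescope (x : ℕ → ℝ) (n : ℕ) :
    ∑ m ∈ Finset.range (n+1), (x m - if m = 0 then 0 else x (m-1)) = x n := by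
  induction n with
  | zero => simp
  | succ n ih => rw [Finset.sum_range_succ, ih]; simp



lemma coeff_mk_mul (f : ℕ → ℝ) (φ : PowerSeries ℝ) (n : ℕ) :
    (PowerSeries.coeff n) (PowerSeries.mk f * φ)
      = ∑ m ∈ Finset.range (n+1), f (n-m) * (PowerSeries.coeff m) φ := by
  rw [PowerSeries.coeff_mul, Finset.Nat.sum_antidiagonal_eq_sum_range_succ_mk]
  simp only [PowerSeries.coeff_mk]
  rw [← Finset.sum_range_reflect (fun m => f (n-m) * (PowerSeries.coeff m) φ) (n+1)]
  apply Finset.sum_congr rfl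
  intro i hi
  have hi' : i ≤ n := by simpa [Nat.lt_succ_iff] using hi
  have h1 : n + 1 - 1 - i = n - i := by omega
  have h2 : n - (n - i) = i := by omega
  rw [h1, h2]

lemma coeff_mk_mk (f g : ℕ → ℝ) (n : ℕ) :
    (PowerSeries.coeff n) (PowerSeries.mk f * PowerSeries.mk g)
      = ∑ m ∈ Finset.range (n+1), f (n-m) * g m := by
  rw [coeff_mk_mul]; simp

lemma ES_one (s D : ℕ → ℝ) (hs : s 0 ≠ 0) (hD0 : D 0 = 1 / s 0)
    (hD : ∀ n : ℕ, 1 ≤ n →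
      (∑ k ∈ Finset.range (n + 1), (-1 : ℝ) ^ k * D k * s (n - k)) = 0) :
    PowerSeries.mk (fun k => (-1:ℝ)^k * D k) * PowerSeries.mk s = 1 := by
  ext n
  rw [PowerSeries.coeff_mul, Finset.Nat.sum_antidiagonal_eq_sum_range_succ_mk]
  simp only [PowerSeries.coeff_mk, PowerSeries.coeff_one]
  match n with
  | 0 => simp [hD0]; field_simp
  | (n+1) =>
    rw [hD (n+1) (by omega)]
    simp

lemma E_cancel_S (e s : ℕ → ℝ) (hES : PowerSeries.mk e * PowerSeries.mk s = 1)
    (v : ℕ → ℝ) (n : ℕ) :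
    ∑ m ∈ Finset.range (n+1), e (n-m) * (∑ i ∈ Finset.range (m+1), s (m-i) * v i) = v n := by
  have h1 : ∀ m, (∑ i ∈ Finset.range (m+1), s (m-i) * v i)
      = (PowerSeries.coeff m) (PowerSeries.mk s * PowerSeries.mk v) := fun m =>
    (coeff_mk_mk s v m).symm
  calc ∑ m ∈ Finset.range (n+1), e (n-m) * (∑ i ∈ Finset.range (m+1), s (m-i) * v i)
      = ∑ m ∈ Finset.range (n+1), e (n-m)
          * (PowerSeries.coeff m) (PowerSeries.mk s * PowerSeries.mk v) := by
        simp_rw [h1]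
    _ = (PowerSeries.coeff n) (PowerSeries.mk e * (PowerSeries.mk s * PowerSeries.mk v)) :=
        (coeff_mk_mul e _ n).symm
    _ = v n := by rw [← mul_assoc, hES, one_mul, PowerSeries.coeff_mk]

lemma S_cancel_E (e s : ℕ → ℝ) (hES : PowerSeries.mk e * PowerSeries.mk s = 1)
    (v : ℕ → ℝ) (n : ℕ) :
    ∑ m ∈ Finset.range (n+1), s (n-m) * (∑ i ∈ Finset.range (m+1), e (m-i) * v i) = v n := by
  exact E_cancel_S s e (by rwa [mul_comm] at hES) v n




lemma w_sum (r t D : ℕ → ℝ) (y : ℕ → ℝ) (n : ℕ) :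
    ∑ j ∈ Finset.range (n+1),
        (∑ k ∈ Finset.range (n-j+1), (-1:ℝ)^k * (D k / t (k+j)) * r j) * y j
    = ∑ m ∈ Finset.range (n+1),
        (1/t m) * (∑ i ∈ Finset.range (m+1), ((-1:ℝ)^(m-i) * D (m-i)) * (r i * y i)) := by
  have hR : ∀ m ∈ Finset.range (n+1),
      (1/t m) * (∑ i ∈ Finset.range (m+1), ((-1:ℝ)^(m-i) * D (m-i)) * (r i * y i))
      = ∑ i ∈ Finset.range (m+1), (1/t m) * (((-1:ℝ)^(m-i) * D (m-i)) * (r i * y i)) := by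
    intro m _; rw [Finset.mul_sum]
  rw [Finset.sum_congr rfl hR,
    tri_swap (fun m i => (1/t m) * (((-1:ℝ)^(m-i) * D (m-i)) * (r i * y i))) n]
  apply Finset.sum_congr rfl
  intro j hj
  rw [Finset.sum_mul]
  apply Finset.sum_congr rfl
  intro k hk
  have h1 : j + k - j = k := by omega
  rw [h1, add_comm j k]
  ring

lemma inv_left (r s t D : ℕ → ℝ) (hr : ∀ n, r n ≠ 0) (ht : ∀ n, t n ≠ 0)
    (hES : PowerSeries.mk (fun k => (-1:ℝ)^k * D k) * PowerSeries.mk s = 1)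
    (x : ℕ → ℝ) (n : ℕ) :
    ∑ j ∈ Finset.range (n+1),
        (∑ k ∈ Finset.range (n-j+1), (-1:ℝ)^k * (D k / t (k+j)) * r j)
          * ((1/r j) * ∑ k ∈ Finset.range (j+1),
              s (j-k) * t k * (x k - if k = 0 then 0 else x (k-1)))
      = x n := by
  set v : ℕ → ℝ := fun k => t k * (x k - if k = 0 then 0 else x (k-1)) with hv
  set y : ℕ → ℝ := fun j => (1/r j) * ∑ k ∈ Finset.range (j+1),
      s (j-k) * t k * (x k - if k = 0 then 0 else x (k-1)) with hy
  have hry : ∀ i, r i * y i = ∑ k ∈ Finset.range (i+1), s (i-k) * v k := by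
    intro i
    rw [hy]
    simp only []
    rw [← mul_assoc, mul_one_div, div_self (hr i), one_mul]
    apply Finset.sum_congr rfl
    intro k _
    rw [hv]
    ring
  rw [w_sum r t D y n]
  have h2 : ∀ m ∈ Finset.range (n+1),
      (1/t m) * (∑ i ∈ Finset.range (m+1), ((-1:ℝ)^(m-i) * D (m-i)) * (r i * y i))
      = (1/t m) * v m := by
    intro m _
    congr 1
    have := E_cancel_S (fun k => (-1:ℝ)^k * D k) s hES v m
    rw [← this]
    apply Finset.sum_congr rfl
    intro i _
    rw [hry i]
  rw [Finset.sum_congr rfl h2]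
  have h3 : ∀ m ∈ Finset.range (n+1),
      (1/t m) * v m = x m - if m = 0 then 0 else x (m-1) := by
    intro m _
    simp only [hv]
    rw [one_div, inv_mul_eq_div, mul_div_cancel_left₀ _ (ht m)]
  rw [Finset.sum_congr rfl h3, telescope]

lemma inv_right (r s t D : ℕ → ℝ) (hr : ∀ n, r n ≠ 0) (ht : ∀ n, t n ≠ 0)
    (hES : PowerSeries.mk (fun k => (-1:ℝ)^k * D k) * PowerSeries.mk s = 1)
    (y : ℕ → ℝ) (n : ℕ) :
    (1/r n) * ∑ k ∈ Finset.range (n+1), s (n-k) * t k *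
        ((∑ j ∈ Finset.range (k+1),
            (∑ l ∈ Finset.range (k-j+1), (-1:ℝ)^l * (D l / t (l+j)) * r j) * y j)
          - if k = 0 then 0 else
            ∑ j ∈ Finset.range (k-1+1),
              (∑ l ∈ Finset.range (k-1-j+1), (-1:ℝ)^l * (D l / t (l+j)) * r j) * y j)
      = y n := by
  set G : ℕ → ℝ := fun p =>
    (1/t p) * (∑ i ∈ Finset.range (p+1), ((-1:ℝ)^(p-i) * D (p-i)) * (r i * y i)) with hG
  have hx : ∀ k, (∑ j ∈ Finset.range (k+1),
      (∑ l ∈ Finset.range (k-j+1), (-1:ℝ)^l * (D l / t (l+j)) * r j) * y j)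
      = ∑ p ∈ Finset.range (k+1), G p := fun k => w_sum r t D y k
  have hdelta : ∀ k, ((∑ j ∈ Finset.range (k+1),
        (∑ l ∈ Finset.range (k-j+1), (-1:ℝ)^l * (D l / t (l+j)) * r j) * y j)
      - if k = 0 then 0 else
        ∑ j ∈ Finset.range (k-1+1),
          (∑ l ∈ Finset.range (k-1-j+1), (-1:ℝ)^l * (D l / t (l+j)) * r j) * y j)
      = G k := by
    intro k
    match k with
    | 0 =>
      rw [if_pos rfl, sub_zero, hx 0, Finset.sum_range_one]
    | (k+1) =>
      simp only [Nat.add_sub_cancel, if_neg (Nat.succ_ne_zero k)]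
      rw [hx (k+1), hx k, Finset.sum_range_succ]
      ring
  simp only [hdelta]
  have h4 : ∀ k ∈ Finset.range (n+1), s (n-k) * t k * G k
      = s (n-k) * (∑ i ∈ Finset.range (k+1), ((-1:ℝ)^(k-i) * D (k-i)) * (r i * y i)) := by
    intro k _
    simp only [hG]
    rw [mul_assoc, ← mul_assoc (t k), mul_one_div, div_self (ht k), one_mul]
  rw [Finset.sum_congr rfl h4,
    S_cancel_E (fun l => (-1:ℝ)^l * D l) s hES (fun i => r i * y i) n]
  rw [one_div, inv_mul_eq_div, mul_div_cancel_left₀ _ (hr n)]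
lemma convex_max {ta a b : ℝ} (h0 : 0 ≤ ta) (h1 : ta ≤ 1) : ta * a + (1 - ta) * b ≤ max a b := by
  calc ta * a + (1 - ta) * b ≤ ta * max a b + (1 - ta) * max a b := by
        gcongr
        · exact le_max_left a b
        · exact le_max_right a b
    _ = max a b := by ring

lemma exists_vertex (c : ℕ → ℕ → ℝ) (N : ℕ) (M : ℝ) (hM : 0 < M) :
    ∀ (J : Finset ℕ) (z y : ℕ → ℝ), (∀ j ∈ J, |y j| ≤ M) →
    ∃ ε : ℕ → ℝ, (∀ j, ε j = M ∨ ε j = -M) ∧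
      ∑ n ∈ Finset.range N, |z n + ∑ j ∈ J, c n j * y j|
        ≤ ∑ n ∈ Finset.range N, |z n + ∑ j ∈ J, c n j * ε j| := by
  classical
  intro J
  induction J using Finset.induction_on with
  | empty =>
    intro z y _
    exact ⟨fun _ => M, fun _ => Or.inl rfl, le_refl _⟩
  | @insert j J' hj ih =>
    intro z y hy
    have hyj : |y j| ≤ M := hy j (Finset.mem_insert_self j J')
    set ta : ℝ := (M + y j) / (2*M) with hta
    have hrange : -M ≤ y j ∧ y j ≤ M := abs_le.mp hyj
    have ht0 : 0 ≤ ta := by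
      apply div_nonneg
      · linarith [hrange.1]
      · linarith
    have ht1 : ta ≤ 1 := by
      rw [hta, div_le_one (by linarith)]
      linarith [hrange.2]
    have hyrep : y j = ta * M + (1 - ta) * (-M) := by
      rw [hta]
      field_simp
      ring
    set R : ℕ → ℝ := fun n => ∑ i ∈ J', c n i * y i with hR
    have expand : ∀ n, z n + ∑ i ∈ insert j J', c n i * y i
        = ta * (z n + (c n j * M + R n)) + (1 - ta) * (z n + (c n j * (-M) + R n)) := by
      intro n
      rw [Finset.sum_insert hj, hR]
      simp only []
      rw [hyrep]
      ring
    have habs : ∑ n ∈ Finset.range N, |z n + ∑ i ∈ insert j J', c n i * y i|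
        ≤ ta * (∑ n ∈ Finset.range N, |z n + (c n j * M + R n)|)
          + (1 - ta) * (∑ n ∈ Finset.range N, |z n + (c n j * (-M) + R n)|) := by
      rw [Finset.mul_sum, Finset.mul_sum, ← Finset.sum_add_distrib]
      apply Finset.sum_le_sum
      intro n _
      rw [expand n]
      calc |ta * (z n + (c n j * M + R n)) + (1 - ta) * (z n + (c n j * (-M) + R n))|
          ≤ |ta * (z n + (c n j * M + R n))| + |(1 - ta) * (z n + (c n j * (-M) + R n))| :=
            abs_add_le _ _
        _ = ta * |z n + (c n j * M + R n)| + (1 - ta) * |z n + (c n j * (-M) + R n)| := by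
            rw [abs_mul, abs_mul, abs_of_nonneg ht0, abs_of_nonneg (by linarith : (0:ℝ) ≤ 1 - ta)]
    have hmax : ∑ n ∈ Finset.range N, |z n + ∑ i ∈ insert j J', c n i * y i|
        ≤ max (∑ n ∈ Finset.range N, |z n + (c n j * M + R n)|)
              (∑ n ∈ Finset.range N, |z n + (c n j * (-M) + R n)|) :=
      habs.trans (convex_max ht0 ht1)
    obtain ⟨u, hu1, hu2⟩ : ∃ u : ℝ, (u = M ∨ u = -M) ∧
        ∑ n ∈ Finset.range N, |z n + ∑ i ∈ insert j J', c n i * y i|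
          ≤ ∑ n ∈ Finset.range N, |z n + (c n j * u + R n)| := by
      rcases le_total (∑ n ∈ Finset.range N, |z n + (c n j * M + R n)|)
          (∑ n ∈ Finset.range N, |z n + (c n j * (-M) + R n)|) with h | h
      · exact ⟨-M, Or.inr rfl, hmax.trans (le_of_eq (max_eq_right h))⟩
      · exact ⟨M, Or.inl rfl, hmax.trans (le_of_eq (max_eq_left h))⟩
    obtain ⟨ε', hε', hle⟩ := ih (fun n => z n + c n j * u) y
      (fun i hi => hy i (Finset.mem_insert_of_mem hi))
    refine ⟨Function.update ε' j u, ?_, ?_⟩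
    · intro i
      by_cases hij : i = j
      · subst hij; rw [Function.update_self]; exact hu1
      · rw [Function.update_of_ne hij]; exact hε' i
    · have hsum : ∀ n, ∑ i ∈ insert j J', c n i * (Function.update ε' j u) i
          = c n j * u + ∑ i ∈ J', c n i * ε' i := by
        intro n
        rw [Finset.sum_insert hj, Function.update_self]
        congr 1
        apply Finset.sum_congr rfl
        intro i hi
        rw [Function.update_of_ne (by rintro rfl; exact hj hi)]
      calc ∑ n ∈ Finset.range N, |z n + ∑ i ∈ insert j J', c n i * y i|
          ≤ ∑ n ∈ Finset.range N, |z n + (c n j * u + R n)| := hu2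
        _ = ∑ n ∈ Finset.range N, |(z n + c n j * u) + ∑ i ∈ J', c n i * y i| := by
            apply Finset.sum_congr rfl
            intro n _
            congr 1
            rw [hR]
            ring
        _ ≤ ∑ n ∈ Finset.range N, |(z n + c n j * u) + ∑ i ∈ J', c n i * ε' i| := hle
        _ = ∑ n ∈ Finset.range N, |z n + ∑ i ∈ insert j J', c n i
              * (Function.update ε' j u) i| := by
            apply Finset.sum_congr rfl
            intro n _
            rw [hsum n]
            congr 1
            ring

lemma vertex_bound (c : ℕ → ℕ → ℝ) (C M : ℝ)
    (hC : ∀ (K : Finset ℕ) (N : ℕ), ∑ n ∈ Finset.range N, |∑ j ∈ K, c n j| ≤ C)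
    (hM : 0 < M) (ε : ℕ → ℝ) (hε : ∀ j, ε j = M ∨ ε j = -M) (J : Finset ℕ) (N : ℕ) :
    ∑ n ∈ Finset.range N, |∑ j ∈ J, c n j * ε j| ≤ 2*C*M := by
  classical
  have key : ∀ n, ∑ j ∈ J, c n j * ε j
      = M * (∑ j ∈ J.filter (fun j => ε j = M), c n j)
        - M * (∑ j ∈ J.filter (fun j => ¬ ε j = M), c n j) := by
    intro n
    rw [← Finset.sum_filter_add_sum_filter_not J (fun j => ε j = M) (fun j => c n j * ε j)]
    rw [Finset.mul_sum, Finset.mul_sum]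
    rw [sub_eq_add_neg, ← Finset.sum_neg_distrib]
    congr 1
    · apply Finset.sum_congr rfl
      intro j hjm
      rw [(Finset.mem_filter.mp hjm).2]
      ring
    · apply Finset.sum_congr rfl
      intro j hjm
      have : ε j = -M := (hε j).resolve_left (Finset.mem_filter.mp hjm).2
      rw [this]
      ring
  calc ∑ n ∈ Finset.range N, |∑ j ∈ J, c n j * ε j|
      ≤ ∑ n ∈ Finset.range N, (M * |∑ j ∈ J.filter (fun j => ε j = M), c n j|
          + M * |∑ j ∈ J.filter (fun j => ¬ ε j = M), c n j|) := by
        apply Finset.sum_le_sum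
        intro n _
        rw [key n]
        calc |M * (∑ j ∈ J.filter (fun j => ε j = M), c n j)
              - M * (∑ j ∈ J.filter (fun j => ¬ ε j = M), c n j)|
            ≤ |M * (∑ j ∈ J.filter (fun j => ε j = M), c n j)|
              + |M * (∑ j ∈ J.filter (fun j => ¬ ε j = M), c n j)| := abs_sub _ _
          _ = M * |∑ j ∈ J.filter (fun j => ε j = M), c n j|
              + M * |∑ j ∈ J.filter (fun j => ¬ ε j = M), c n j| := by
              rw [abs_mul, abs_mul, abs_of_pos hM]
    _ = M * (∑ n ∈ Finset.range N, |∑ j ∈ J.filter (fun j => ε j = M), c n j|)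
        + M * (∑ n ∈ Finset.range N, |∑ j ∈ J.filter (fun j => ¬ ε j = M), c n j|) := by
        rw [Finset.sum_add_distrib, Finset.mul_sum, Finset.mul_sum]
    _ ≤ M * C + M * C := by
        gcongr
        · exact hC _ N
        · exact hC _ N
    _ = 2*C*M := by ring

lemma row_bound (c : ℕ → ℕ → ℝ) (C M : ℝ)
    (hC : ∀ (K : Finset ℕ) (N : ℕ), ∑ n ∈ Finset.range N, |∑ j ∈ K, c n j| ≤ C)
    (hM : 0 < M) (J : Finset ℕ) (N : ℕ) (y : ℕ → ℝ) (hy : ∀ j ∈ J, |y j| ≤ M) :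
    ∑ n ∈ Finset.range N, |∑ j ∈ J, c n j * y j| ≤ 2*C*M := by
  obtain ⟨ε, hε, hle⟩ := exists_vertex c N M hM J (fun _ => 0) y hy
  simp only [zero_add] at hle
  exact hle.trans (vertex_bound c C M hC hM ε hε J N)
end Stmt15Aux

open Stmt15Aux

/-- The α-dual of `ℓ∞(r,s,t;Δ)`: `(a_n x_n) ∈ ℓ₁` for every `x ∈ ℓ∞(r,s,t;Δ)`
iff `sup_{K finite nonempty} ∑_n |∑_{j∈K} ∑_{k=0}^{n-j} (-1)^k (D_k/t_{k+j}) r_j a_n| < ∞`. -/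
theorem stmt_15 (r s t D a : ℕ → ℝ) (hr : ∀ n, r n ≠ 0) (ht : ∀ n, t n ≠ 0)
    (hs : s 0 ≠ 0) (hD0 : D 0 = 1 / s 0)
    (hD : ∀ n : ℕ, 1 ≤ n →
      (∑ k ∈ Finset.range (n + 1), (-1 : ℝ) ^ k * D k * s (n - k)) = 0) :
    let T : (ℕ → ℝ) → ℕ → ℝ := fun x n =>
      (1 / r n) * ∑ k ∈ Finset.range (n + 1),
        s (n - k) * t k * (x k - if k = 0 then 0 else x (k - 1))
    let X : Set (ℕ → ℝ) := {x | BddAbove (Set.range fun n => |T x n|)}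
    let c : ℕ → ℕ → ℝ := fun n j =>
      if j ≤ n then
        (∑ k ∈ Finset.range (n - j + 1), (-1 : ℝ) ^ k * (D k / t (k + j)) * r j) * a n
      else 0
    ((∀ x ∈ X, Summable fun n => |a n * x n|) ↔
      ∃ C, ∀ K : Finset ℕ, K.Nonempty →
        ∀ N : ℕ, ∑ n ∈ Finset.range N, |∑ j ∈ K, c n j| ≤ C) := by
  classical
  intro T X c
  have hES : PowerSeries.mk (fun k => (-1:ℝ)^k * D k) * PowerSeries.mk s = 1 :=
    ES_one s D hs hD0 hD
  set w : ℕ → ℕ → ℝ :=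
    fun n j => ∑ k ∈ Finset.range (n-j+1), (-1:ℝ)^k * (D k / t (k+j)) * r j with hwdef
  set q : ℕ → ℕ → ℝ := fun n j => if j ≤ n then w n j else 0 with hqdef
  have hc : ∀ n j, c n j = q n j * a n := by
    intro n j
    show (if j ≤ n then _ else _) = _
    simp only [hqdef]
    split <;> simp [hwdef]
  have hI1 : ∀ (x : ℕ → ℝ) (n : ℕ), ∑ j ∈ Finset.range (n+1), w n j * T x j = x n :=
    fun x n => inv_left r s t D hr ht hES x n
  have hI2 : ∀ (y : ℕ → ℝ) (n : ℕ),
      T (fun m => ∑ j ∈ Finset.range (m+1), w m j * y j) n = y n :=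
    fun y n => inv_right r s t D hr ht hES y n
  constructor
  · -- forward
    intro H
    by_contra hno
    push_neg at hno
    set xK : Finset ℕ → ℕ → ℝ :=
      fun K n => ∑ j ∈ Finset.range (n+1), w n j * (if j ∈ K then (1:ℝ) else 0) with hxKdef
    set g : Finset ℕ → ℕ → ℝ := fun K n => |a n * xK K n| with hgdef
    set P : Finset ℕ → ℕ → ℝ := fun K N => ∑ n ∈ Finset.range N, g K n with hPdef
    have hg0 : ∀ (K : Finset ℕ) (n : ℕ), 0 ≤ g K n := fun K n => abs_nonneg _
    have hXK : ∀ K : Finset ℕ, xK K ∈ X := by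
      intro K
      refine ⟨1, ?_⟩
      rintro b ⟨n, rfl⟩
      have hTxK : T (xK K) n = (if n ∈ K then (1:ℝ) else 0) :=
        hI2 (fun j => if j ∈ K then (1:ℝ) else 0) n
      simp only [hTxK]
      split <;> simp
    have hgsum : ∀ K, Summable (g K) := fun K => H (xK K) (hXK K)
    have hPmono : ∀ K, Monotone (P K) := by
      intro K
      apply monotone_nat_of_le_succ
      intro N
      simp only [hPdef]
      rw [Finset.sum_range_succ]
      exact le_add_of_nonneg_right (hg0 K N)
    have hPle : ∀ K N, P K N ≤ ∑' n, g K n := fun K N =>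
      (hgsum K).sum_le_tsum (Finset.range N) (fun n _ => hg0 K n)
    have hxKq : ∀ (K : Finset ℕ) (n : ℕ), xK K n = ∑ j ∈ K, q n j := by
      intro K n
      simp only [hxKdef]
      have h1 : ∀ j ∈ Finset.range (n+1),
          w n j * (if j ∈ K then (1:ℝ) else 0) = if j ∈ K then w n j else 0 := by
        intro j _
        split <;> ring
      rw [Finset.sum_congr rfl h1, Finset.sum_ite_mem]
      have h2 : ∑ j ∈ K, q n j = ∑ j ∈ K.filter (fun j => j ≤ n), w n j := by
        rw [Finset.sum_filter]
      rw [h2]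
      congr 1
      ext j
      simp [Nat.lt_succ_iff, and_comm]
    have hxKsingle : ∀ j n, xK {j} n = q n j := by
      intro j n
      rw [hxKq]
      simp
    have hcol : ∀ (K : Finset ℕ) (n : ℕ), (∑ j ∈ K, c n j) = a n * xK K n := by
      intro K n
      rw [hxKq, Finset.mul_sum]
      apply Finset.sum_congr rfl
      intro j _
      rw [hc]
      ring
    have hSP : ∀ (K : Finset ℕ) (N : ℕ),
        (∑ n ∈ Finset.range N, |∑ j ∈ K, c n j|) = P K N := by
      intro K N
      apply Finset.sum_congr rfl
      intro n _
      rw [hcol]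
    have hxKadd : ∀ (K L : Finset ℕ), Disjoint K L → ∀ n,
        xK (K ∪ L) n = xK K n + xK L n := by
      intro K L hKL n
      rw [hxKq, hxKq, hxKq, ← Finset.sum_union hKL]
    have hlow : ∀ (m : ℕ) (K : Finset ℕ), (∀ j ∈ K, j < m) → ∀ N,
        P K N ≤ ∑ j ∈ Finset.range m, ∑' n, g {j} n := by
      intro m K hKm N
      have h1 : ∀ n, g K n ≤ ∑ j ∈ K, g {j} n := by
        intro n
        simp only [hgdef]
        rw [hxKq, Finset.mul_sum]
        refine (Finset.abs_sum_le_sum_abs _ _).trans ?_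
        apply Finset.sum_le_sum
        intro j _
        rw [hxKsingle]
      calc P K N ≤ ∑ n ∈ Finset.range N, ∑ j ∈ K, g {j} n :=
            Finset.sum_le_sum fun n _ => h1 n
        _ = ∑ j ∈ K, ∑ n ∈ Finset.range N, g {j} n := Finset.sum_comm
        _ ≤ ∑ j ∈ K, ∑' n, g {j} n := Finset.sum_le_sum fun j _ => hPle {j} N
        _ ≤ ∑ j ∈ Finset.range m, ∑' n, g {j} n :=
            Finset.sum_le_sum_of_subset_of_nonneg
              (fun j hj => Finset.mem_range.mpr (hKm j hj))
              (fun j _ _ => tsum_nonneg (fun n => hg0 _ n))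
    have hbig : ∀ (m : ℕ) (Creq : ℝ), ∃ (K : Finset ℕ) (N : ℕ),
        (∀ j ∈ K, m ≤ j) ∧ Creq < P K N := by
      intro m Creq
      obtain ⟨K, hKne, N, hKN⟩ := hno (max Creq 0 + ∑ j ∈ Finset.range m, ∑' n, g {j} n)
      rw [hSP] at hKN
      set K₁ := K.filter (fun j => ¬ m ≤ j) with hK₁
      set K₂ := K.filter (fun j => m ≤ j) with hK₂
      have hunion : K₂ ∪ K₁ = K := Finset.filter_union_filter_not_eq _ K
      have hdisj : Disjoint K₂ K₁ := Finset.disjoint_filter_filter_not K K _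
      have hsplit : P K N ≤ P K₁ N + P K₂ N := by
        simp only [hPdef]
        rw [← Finset.sum_add_distrib]
        apply Finset.sum_le_sum
        intro n _
        have hx : xK K n = xK K₂ n + xK K₁ n := by
          rw [← hxKadd K₂ K₁ hdisj, hunion]
        simp only [hgdef]
        rw [hx, mul_add]
        exact (abs_add_le _ _).trans_eq (add_comm _ _)
      have h₁le : P K₁ N ≤ ∑ j ∈ Finset.range m, ∑' n, g {j} n :=
        hlow m K₁ (by
          intro j hj
          have := (Finset.mem_filter.mp hj).2
          omega) N
      refine ⟨K₂, N, fun j hj => (Finset.mem_filter.mp hj).2, ?_⟩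
      have hCreq : Creq ≤ max Creq 0 := le_max_left _ _
      linarith
    have htail : ∀ (U : Finset ℕ) (N0 : ℕ), ∃ M, N0 ≤ M ∧ ∀ N', P U N' ≤ P U M + 1 := by
      intro U N0
      have hhs := (hgsum U).hasSum.tendsto_sum_nat
      have hev : ∀ᶠ m in Filter.atTop,
          (∑' n, g U n) - 1 < ∑ n ∈ Finset.range m, g U n :=
        hhs.eventually (eventually_gt_nhds (sub_lt_self _ one_pos))
      obtain ⟨M₀, hM₀⟩ := Filter.eventually_atTop.mp hev
      refine ⟨max M₀ N0, le_max_right _ _, ?_⟩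
      intro N'
      have h1 : (∑' n, g U n) - 1 < P U (max M₀ N0) := hM₀ (max M₀ N0) (le_max_left _ _)
      have h2 := hPle U N'
      linarith
    have step : ∀ (U : Finset ℕ) (N : ℕ) (i : ℕ), ∃ (U' : Finset ℕ) (N' : ℕ),
        ((∀ j ∈ U, j < N) →
          N ≤ N' ∧ U ⊆ U' ∧ (∀ j ∈ U', j < N') ∧ (∀ j ∈ U', j ∈ U ∨ N ≤ j) ∧
          ((i : ℝ) ≤ ∑ n ∈ Finset.Ico N N', g U' n)) := by
      intro U N i
      obtain ⟨M₀, hM₀N, hM₀tail⟩ := htail U N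
      obtain ⟨K, N₁, hKm, hKP⟩ := hbig M₀ ((i : ℝ) + 1)
      set N' := max N₁ M₀ with hN'
      have hN'M₀ : M₀ ≤ N' := le_max_right _ _
      have hN'N : N ≤ N' := le_trans hM₀N hN'M₀
      have hPKN' : (i:ℝ) + 1 < P K N' := lt_of_lt_of_le hKP (hPmono K (le_max_left _ _))
      set K' := K.filter (fun j => j < N') with hK'
      refine ⟨U ∪ K', N', fun hUN => ?_⟩
      have hK'M₀ : ∀ j ∈ K', M₀ ≤ j := fun j hj => hKm j (Finset.mem_filter.mp hj).1
      have hdisj : Disjoint U K' := by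
        rw [Finset.disjoint_left]
        intro j hjU hjK'
        have h1 := hUN j hjU
        have h2 := hK'M₀ j hjK'
        omega
      have hPK'N' : P K' N' = P K N' := by
        simp only [hPdef]
        apply Finset.sum_congr rfl
        intro n hn
        have hnN' : n < N' := Finset.mem_range.mp hn
        have hxeq : xK K' n = xK K n := by
          rw [hxKq, hxKq]
          apply Finset.sum_subset (Finset.filter_subset _ K)
          intro j hjK hjn
          have h3 : ¬ j < N' := fun hlt => hjn (Finset.mem_filter.mpr ⟨hjK, hlt⟩)
          have h4 : ¬ j ≤ n := by omega
          rw [hqdef]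
          simp only [if_neg h4]
        simp only [hgdef]
        rw [hxeq]
      have hPK'M₀ : P K' M₀ = 0 := by
        simp only [hPdef]
        apply Finset.sum_eq_zero
        intro n hn
        have hnM₀ : n < M₀ := Finset.mem_range.mp hn
        have hxz : xK K' n = 0 := by
          rw [hxKq]
          apply Finset.sum_eq_zero
          intro j hj
          have := hK'M₀ j hj
          rw [hqdef]
          simp only [if_neg (by omega : ¬ j ≤ n)]
        simp only [hgdef]
        rw [hxz, mul_zero, abs_zero]
      have hgsub : ∀ n, g K' n ≤ g (U ∪ K') n + g U n := by
        intro n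
        have hadd : xK (U ∪ K') n = xK U n + xK K' n := hxKadd U K' hdisj n
        simp only [hgdef]
        have heq : a n * xK K' n = a n * xK (U ∪ K') n - a n * xK U n := by
          rw [hadd]
          ring
        rw [heq]
        exact abs_sub _ _
      have hwin1 : ∑ n ∈ Finset.Ico M₀ N', g K' n
          ≤ ∑ n ∈ Finset.Ico M₀ N', g (U ∪ K') n + ∑ n ∈ Finset.Ico M₀ N', g U n := by
        rw [← Finset.sum_add_distrib]
        exact Finset.sum_le_sum (fun n _ => hgsub n)
      have hIcoK' : ∑ n ∈ Finset.Ico M₀ N', g K' n = P K' N' - P K' M₀ := by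
        simp only [hPdef]
        rw [Finset.sum_Ico_eq_sub _ hN'M₀]
      have hIcoU : ∑ n ∈ Finset.Ico M₀ N', g U n = P U N' - P U M₀ := by
        simp only [hPdef]
        rw [Finset.sum_Ico_eq_sub _ hN'M₀]
      have hUtail : P U N' - P U M₀ ≤ 1 := by linarith [hM₀tail N']
      have hwin2 : (i : ℝ) ≤ ∑ n ∈ Finset.Ico M₀ N', g (U ∪ K') n := by
        linarith
      have hwin3 : ∑ n ∈ Finset.Ico M₀ N', g (U ∪ K') n
          ≤ ∑ n ∈ Finset.Ico N N', g (U ∪ K') n :=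
        Finset.sum_le_sum_of_subset_of_nonneg
          (Finset.Ico_subset_Ico hM₀N le_rfl) (fun n _ _ => hg0 _ n)
      refine ⟨hN'N, Finset.subset_union_left, ?_, ?_, le_trans hwin2 hwin3⟩
      · intro j hj
        rcases Finset.mem_union.mp hj with h | h
        · exact lt_of_lt_of_le (hUN j h) hN'N
        · exact (Finset.mem_filter.mp h).2
      · intro j hj
        rcases Finset.mem_union.mp hj with h | h
        · exact Or.inl h
        · exact Or.inr (le_trans hM₀N (hK'M₀ j h))
    choose fU fN hstep using step
    set F : ℕ → Finset ℕ × ℕ := fun i =>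
      Nat.rec ((∅ : Finset ℕ), 0) (fun i p => (fU p.1 p.2 (i+1), fN p.1 p.2 (i+1))) i
      with hFdef
    have hinv : ∀ i, ∀ j ∈ (F i).1, j < (F i).2 := by
      intro i
      induction i with
      | zero =>
        intro j hj
        simp only [hFdef] at hj
        exact absurd hj (Finset.notMem_empty j)
      | succ i ih =>
        exact (hstep (F i).1 (F i).2 (i+1) ih).2.2.1
    have hprop : ∀ i, (F i).2 ≤ (F (i+1)).2 ∧ (F i).1 ⊆ (F (i+1)).1 ∧
        (∀ j ∈ (F (i+1)).1, j ∈ (F i).1 ∨ (F i).2 ≤ j) ∧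
        (((i:ℕ)+1 : ℝ) ≤ ∑ n ∈ Finset.Ico (F i).2 (F (i+1)).2, g (F (i+1)).1 n) := by
      intro i
      have h := hstep (F i).1 (F i).2 (i+1) (hinv i)
      refine ⟨h.1, h.2.1, h.2.2.2.1, ?_⟩
      have h5 := h.2.2.2.2
      push_cast at h5 ⊢
      exact h5
    have hNmono : Monotone (fun i => (F i).2) :=
      monotone_nat_of_le_succ (fun i => (hprop i).1)
    have hUmono : Monotone (fun i => (F i).1) :=
      monotone_nat_of_le_succ (fun i => (hprop i).2.1)
    have hstable : ∀ i l, i ≤ l → ∀ j ∈ (F l).1, j ∈ (F i).1 ∨ (F i).2 ≤ j := by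
      intro i l hil
      induction l, hil using Nat.le_induction with
      | base => exact fun j hj => Or.inl hj
      | succ l hil ih =>
        intro j hj
        rcases (hprop l).2.2.1 j hj with h | h
        · exact ih j h
        · exact Or.inr (le_trans (hNmono hil) h)
    set yI : ℕ → ℝ := fun j => if ∃ i, j ∈ (F i).1 then 1 else 0 with hyI
    set xI : ℕ → ℝ := fun n => ∑ j ∈ Finset.range (n+1), w n j * yI j with hxI
    have hxIX : xI ∈ X := by
      refine ⟨1, ?_⟩
      rintro b ⟨n, rfl⟩
      have hT : T xI n = yI n := hI2 yI n
      simp only [hT, hyI]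
      split <;> simp
    have hsumI := H xI hxIX
    have hkey : ∀ i, ∀ n, n < (F i).2 → xI n = xK (F i).1 n := by
      intro i n hn
      simp only [hxI, hxKdef]
      apply Finset.sum_congr rfl
      intro j hj
      have hjn : j ≤ n := Nat.lt_succ_iff.mp (Finset.mem_range.mp hj)
      congr 1
      simp only [hyI]
      by_cases hjF : j ∈ (F i).1
      · rw [if_pos ⟨i, hjF⟩, if_pos hjF]
      · rw [if_neg ?_, if_neg hjF]
        rintro ⟨l, hl⟩
        rcases le_total l i with h | h
        · exact hjF (hUmono h hl)
        · rcases hstable i l h j hl with h' | h'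
          · exact hjF h'
          · omega
    have hwindow : ∀ i : ℕ, ((i:ℕ)+1 : ℝ) ≤ ∑' n, |a n * xI n| := by
      intro i
      have h1 := (hprop i).2.2.2
      have h2 : ∑ n ∈ Finset.Ico (F i).2 (F (i+1)).2, g (F (i+1)).1 n
          = ∑ n ∈ Finset.Ico (F i).2 (F (i+1)).2, |a n * xI n| := by
        apply Finset.sum_congr rfl
        intro n hn
        have hn2 : n < (F (i+1)).2 := (Finset.mem_Ico.mp hn).2
        simp only [hgdef]
        rw [hkey (i+1) n hn2]
      rw [h2] at h1
      exact le_trans h1 (hsumI.sum_le_tsum _ (fun n _ => abs_nonneg _))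
    obtain ⟨i, hi⟩ := exists_nat_gt (∑' n, |a n * xI n|)
    have h6 := hwindow i
    push_cast at h6 hi
    linarith

  · -- backward
    rintro ⟨C, hC⟩ x hx
    have hC0 : (0:ℝ) ≤ C := by
      have := hC {0} ⟨0, Finset.mem_singleton_self 0⟩ 0
      simpa using this
    have hCall : ∀ (K : Finset ℕ) (N : ℕ), ∑ n ∈ Finset.range N, |∑ j ∈ K, c n j| ≤ C := by
      intro K N
      rcases K.eq_empty_or_nonempty with rfl | hK
      · simpa using hC0
      · exact hC K hK N
    obtain ⟨B, hB⟩ := hx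
    rw [mem_upperBounds] at hB
    have hyb : ∀ n, |T x n| ≤ B := fun n => hB _ (Set.mem_range_self n)
    have hB0 : (0:ℝ) ≤ B := le_trans (abs_nonneg _) (hyb 0)
    have hM : (0:ℝ) < B + 1 := by linarith
    have key : ∀ N, ∀ n < N, a n * x n = ∑ j ∈ Finset.range N, c n j * T x j := by
      intro N n hn
      have hsplit := Finset.sum_range_add_sum_Ico (fun j => c n j * T x j)
        (show n+1 ≤ N from hn)
      rw [← hsplit]
      have h2 : ∑ j ∈ Finset.Ico (n+1) N, c n j * T x j = 0 := by
        apply Finset.sum_eq_zero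
        intro j hj
        have : ¬ j ≤ n := by
          have := (Finset.mem_Ico.mp hj).1
          omega
        rw [hc, hqdef]
        simp only [if_neg this]
        ring
      rw [h2, add_zero]
      have h3 : ∀ j ∈ Finset.range (n+1), c n j * T x j = w n j * T x j * a n := by
        intro j hj
        have hjn : j ≤ n := by
          have := Finset.mem_range.mp hj
          omega
        rw [hc, hqdef]
        simp only [if_pos hjn]
        ring
      rw [Finset.sum_congr rfl h3, ← Finset.sum_mul, hI1 x n]
      ring
    have hbound : ∀ N, ∑ n ∈ Finset.range N, |a n * x n| ≤ 2*C*(B+1) := by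
      intro N
      have h4 : ∑ n ∈ Finset.range N, |a n * x n|
          = ∑ n ∈ Finset.range N, |∑ j ∈ Finset.range N, c n j * T x j| := by
        apply Finset.sum_congr rfl
        intro n hn
        rw [key N n (Finset.mem_range.mp hn)]
      rw [h4]
      exact row_bound c C (B+1) hCall hM (Finset.range N) N (T x)
        (fun j _ => le_trans (hyb j) (by linarith))
    exact summable_of_sum_range_le (fun n => abs_nonneg _) hbound
end

section
/- Let r, t be sequences of nonzero reals, s with s₀ ≠ 0, (D_k) the reciprocal coefficients of s, and a = (a_n) any real sequence. For every x in the span of the representation x_n = ∑_{j=0}^{n} ∑_{k=0}^{n−j} (−1)^k (D_k/t_{k+j}) r_j y_j (y arbitrary), the Abel-type summation identity holds for every m: ∑_{n=0}^{m} a_n x_n = ∑_{n=0}^{m} r_n [ a_n/(s₀ t_n) + (D₀/t_n − D₁/t_{n+1}) ∑_{j=n+1}^{m} a_j + ∑_{j=n+2}^{m} (−1)^{j−n} (D_{j−n}/t_j) ∑_{k=j}^{m} a_k ] y_n, where empty sums are 0. -/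
open Finset

lemma key16 (D t a : ℕ → ℝ) (m n : ℕ) (hnm : n ≤ m) :
    ∑ k ∈ range (m - n + 1), (-1:ℝ)^k * (D k / t (k + n)) * (∑ i ∈ Icc (n + k) m, a i)
    = a n * (D 0 / t n)
      + (D 0 / t n - D 1 / t (n+1)) * ∑ j ∈ Icc (n+1) m, a j
      + ∑ j ∈ Icc (n+2) m, (-1:ℝ)^(j-n) * (D (j-n) / t j) * ∑ k ∈ Icc j m, a k := by
  have hA : ∑ i ∈ Icc n m, a i = a n + ∑ i ∈ Icc (n+1) m, a i := by
    rw [show Icc n m = insert n (Icc (n+1) m) from by ext z; simp; omega,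
      sum_insert (by simp)]
  rw [Finset.sum_range_succ']
  simp only [pow_zero, Nat.add_zero, Nat.zero_add, one_mul]
  rw [hA]
  by_cases h1 : n + 1 ≤ m
  · rw [show m - n = (m - n - 1) + 1 from by omega, Finset.sum_range_succ']
    have h2 : ∑ j ∈ Icc (n+2) m, (-1:ℝ)^(j-n) * (D (j-n) / t j) * ∑ k ∈ Icc j m, a k
        = ∑ i ∈ range (m - n - 1),
            (-1:ℝ)^(i+1+1) * (D (i+1+1) / t (i+1+1+n)) * ∑ k ∈ Icc (n + (i+1+1)) m, a k := by
      rw [show Icc (n+2) m = Ico (n+2) (m+1) from rfl, Finset.sum_Ico_eq_sum_range,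
        show m + 1 - (n + 2) = m - n - 1 from by omega]
      refine Finset.sum_congr rfl fun i _ => ?_
      rw [show n + 2 + i - n = i + 1 + 1 from by omega, show n + 2 + i = i + 1 + 1 + n from by omega,
        show n + (i + 1 + 1) = i + 1 + 1 + n from by omega]
    rw [h2]
    rw [show 1 + n = n + 1 from by omega]
    ring
  · have hm : m = n := by omega
    subst hm
    simp [show m - m = 0 from by omega]
    ring

/-- Abel-type summation identity: for `x_n = ∑_{j≤n} ∑_{k≤n-j} (-1)^k (D_k/t_{k+j}) r_j y_j`,
the partial sums `∑_{n≤m} a_n x_n` equal `(Ey)_m` for the matrix `E` of Theorem 4.6. -/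
theorem stmt_16 (r s t D a y : ℕ → ℝ) (hr : ∀ n, r n ≠ 0) (ht : ∀ n, t n ≠ 0)
    (hs : s 0 ≠ 0) (hD0 : D 0 = 1 / s 0)
    (hD : ∀ n : ℕ, 1 ≤ n →
      (∑ k ∈ Finset.range (n + 1), (-1 : ℝ) ^ k * D k * s (n - k)) = 0) :
    let x : ℕ → ℝ := fun n => ∑ j ∈ Finset.range (n + 1),
      (∑ k ∈ Finset.range (n - j + 1), (-1 : ℝ) ^ k * (D k / t (k + j)) * r j) * y j
    ∀ m : ℕ,
      ∑ n ∈ Finset.range (m + 1), a n * x n =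
      ∑ n ∈ Finset.range (m + 1), r n *
        (a n / (s 0 * t n)
          + (D 0 / t n - D 1 / t (n + 1)) * ∑ j ∈ Finset.Icc (n + 1) m, a j
          + ∑ j ∈ Finset.Icc (n + 2) m,
              (-1 : ℝ) ^ (j - n) * (D (j - n) / t j) * ∑ k ∈ Finset.Icc j m, a k) * y n := by
  intro x m
  calc ∑ n ∈ range (m+1), a n * x n
      = ∑ n ∈ range (m+1), ∑ j ∈ range (n+1),
          a n * ((∑ k ∈ range (n - j + 1), (-1:ℝ)^k * (D k / t (k+j)) * r j) * y j) := by
        simp only [x, Finset.mul_sum]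
    _ = ∑ j ∈ range (m+1), ∑ n ∈ Icc j m,
          a n * ((∑ k ∈ range (n - j + 1), (-1:ℝ)^k * (D k / t (k+j)) * r j) * y j) := by
        refine Finset.sum_comm' fun n j => ?_
        simp only [mem_range, mem_Icc]
        omega
    _ = ∑ j ∈ range (m+1), r j *
        (a j / (s 0 * t j)
          + (D 0 / t j - D 1 / t (j + 1)) * ∑ i ∈ Icc (j + 1) m, a i
          + ∑ i ∈ Icc (j + 2) m,
              (-1 : ℝ) ^ (i - j) * (D (i - j) / t i) * ∑ k ∈ Icc i m, a k) * y j := by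
        refine Finset.sum_congr rfl fun j hj => ?_
        have hjm : j ≤ m := by simp at hj; omega
        have step1 : ∑ n ∈ Icc j m,
            a n * ((∑ k ∈ range (n - j + 1), (-1:ℝ)^k * (D k / t (k+j)) * r j) * y j)
            = (∑ n ∈ Icc j m, ∑ k ∈ range (n - j + 1),
                a n * ((-1:ℝ)^k * (D k / t (k+j)))) * (r j * y j) := by
          rw [Finset.sum_mul]
          refine Finset.sum_congr rfl fun n _ => ?_
          rw [Finset.sum_mul, Finset.mul_sum, Finset.sum_mul]
          exact Finset.sum_congr rfl fun k _ => by ring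
        have step2 : ∑ n ∈ Icc j m, ∑ k ∈ range (n - j + 1),
              a n * ((-1:ℝ)^k * (D k / t (k+j)))
            = ∑ k ∈ range (m - j + 1), (-1:ℝ)^k * (D k / t (k + j)) *
                (∑ i ∈ Icc (j + k) m, a i) := by
          rw [Finset.sum_comm' (t' := range (m - j + 1)) (s' := fun k => Icc (j + k) m)
            (fun n k => by simp only [mem_range, mem_Icc]; omega)]
          refine Finset.sum_congr rfl fun k _ => ?_
          rw [Finset.mul_sum]
          exact Finset.sum_congr rfl fun i _ => by ring
        rw [step1, step2, key16 D t a m j hjm, hD0, div_div, mul_one_div]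
        ring
end

section
/- Let s_n = 1 for all n and (D_k) its reciprocal coefficient sequence. Then for any sequences r, t of nonzero reals, the inverse S = (s_{jk}) of the product triangle T = A(r,s,t)·Δ is given by s_{jk} = r_k(1/t_k − 1/t_{k+1}) for 0 ≤ k < j, s_{jj} = r_j/t_j, and s_{jk} = 0 for k > j; that is, (T·S)_{nk} = (S·T)_{nk} = δ_{nk}. -/
/-- For `s ≡ 1`, the explicit matrix `S` with `s_{jk} = r_k(1/t_k - 1/t_{k+1})`
for `k < j`, `s_{jj} = r_j/t_j`, is the two-sided inverse of `T = A(r,s,t)·Δ`. -/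
theorem stmt_18 (r t : ℕ → ℝ) (hr : ∀ n, r n ≠ 0) (ht : ∀ n, t n ≠ 0) :
    let A : ℕ → ℕ → ℝ := fun n k => if k ≤ n then t k / r n else 0
    let Dm : ℕ → ℕ → ℝ := fun j k => if k = j then 1 else if k + 1 = j then -1 else 0
    let Tm : ℕ → ℕ → ℝ := fun n k => ∑ j ∈ Finset.range (n + 1), A n j * Dm j k
    let S : ℕ → ℕ → ℝ := fun j k =>
      if k < j then r k * (1 / t k - 1 / t (k + 1))
      else if k = j then r j / t j else 0
    (∀ n k, (∑ j ∈ Finset.range (n + 1), Tm n j * S j k) = if n = k then 1 else 0) ∧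
    (∀ n k, (∑ j ∈ Finset.range (n + 1), S n j * Tm j k) = if n = k then 1 else 0) := by
  intro A Dm Tm S
  have hT : ∀ n k, Tm n k =
      (if k ≤ n then t k / r n else 0) - (if k + 1 ≤ n then t (k + 1) / r n else 0) := by
    intro n k
    show (∑ j ∈ Finset.range (n + 1), A n j * Dm j k) = _
    have h1 : ∀ j, A n j * Dm j k =
        (if k = j then A n j else 0) + (if k + 1 = j then -(A n j) else 0) := by
      intro j
      simp only [Dm]
      split_ifs with h h' <;> try omega
      all_goals ring
    rw [Finset.sum_congr rfl (fun j _ => h1 j), Finset.sum_add_distrib,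
      Finset.sum_ite_eq, Finset.sum_ite_eq]
    simp only [Finset.mem_range, Nat.lt_succ_iff, A]
    by_cases h : k ≤ n <;> by_cases h' : k + 1 ≤ n <;> simp [h, h'] <;> ring
  have htel : ∀ (f : ℕ → ℝ) (m N : ℕ), m ≤ N →
      ∑ j ∈ Finset.Ico m N, (f j - f (j + 1)) = f m - f N := by
    intro f m N h
    rw [Finset.sum_Ico_eq_sub _ h, Finset.sum_range_sub' f, Finset.sum_range_sub' f]
    ring
  constructor
  · intro n k
    rcases lt_trichotomy n k with h | rfl | h
    · rw [if_neg (by omega)]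
      apply Finset.sum_eq_zero
      intro j hj
      simp only [Finset.mem_range, Nat.lt_succ_iff] at hj
      have h1 : ¬ k < j := by omega
      have h2 : k ≠ j := by omega
      simp [S, h1, h2]
    · rw [if_pos rfl, Finset.sum_range_succ]
      have h0 : ∀ j ∈ Finset.range n, Tm n j * S j n = 0 := by
        intro j hj
        simp only [Finset.mem_range] at hj
        have h1 : ¬ n < j := by omega
        have h2 : n ≠ j := by omega
        simp [S, h1, h2]
      rw [Finset.sum_eq_zero h0, hT]
      simp only [S, lt_irrefl, if_neg (lt_irrefl n), if_pos rfl, le_refl,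
        if_neg (by omega : ¬ n + 1 ≤ n), ↓reduceIte]
      field_simp [hr n, ht n]
      ring
    · rw [if_neg (by omega)]
      have hsub : Finset.Ico k (n + 1) ⊆ Finset.range (n + 1) := by
        intro j hj; simp only [Finset.mem_Ico] at hj; simp only [Finset.mem_range]; omega
      rw [← Finset.sum_subset hsub (by
        intro j hj hj'
        simp only [Finset.mem_range] at hj
        simp only [Finset.mem_Ico] at hj'
        have h1 : ¬ k < j := by omega
        have h2 : k ≠ j := by omega
        simp [S, h1, h2])]
      rw [Finset.sum_eq_sum_Ico_succ_bot (by omega : k < n + 1),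
        Finset.sum_Ico_succ_top (by omega : k + 1 ≤ n)]
      have hmid : ∑ j ∈ Finset.Ico (k + 1) n, Tm n j * S j k =
          (t (k + 1) / r n) * (r k * (1 / t k - 1 / t (k + 1))) -
            (t n / r n) * (r k * (1 / t k - 1 / t (k + 1))) := by
        rw [← htel (fun j => (t j / r n) * (r k * (1 / t k - 1 / t (k + 1)))) (k + 1) n
          (by omega)]
        apply Finset.sum_congr rfl
        intro j hj
        simp only [Finset.mem_Ico] at hj
        rw [hT]
        simp only [S, if_pos (show k < j by omega), if_pos (show j ≤ n by omega),
          if_pos (show j + 1 ≤ n by omega)]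
        ring
      rw [hmid, hT, hT]
      simp only [S, if_neg (lt_irrefl k), if_pos rfl, if_pos (show k < n from h),
        if_pos (show k ≤ n by omega), if_pos (show k + 1 ≤ n by omega),
        if_pos (le_refl n), if_neg (show ¬ n + 1 ≤ n by omega), ↓reduceIte]
      field_simp [hr n, hr k, ht k, ht (k + 1), ht n]
      ring
  · intro n k
    rcases lt_trichotomy n k with h | rfl | h
    · rw [if_neg (by omega)]
      apply Finset.sum_eq_zero
      intro j hj
      simp only [Finset.mem_range, Nat.lt_succ_iff] at hj
      rw [hT, if_neg (by omega), if_neg (by omega)]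
      ring
    · rw [if_pos rfl, Finset.sum_range_succ]
      have h0 : ∀ j ∈ Finset.range n, S n j * Tm j n = 0 := by
        intro j hj
        simp only [Finset.mem_range] at hj
        rw [hT, if_neg (by omega), if_neg (by omega)]
        ring
      rw [Finset.sum_eq_zero h0, hT]
      simp only [S, if_neg (lt_irrefl n), if_pos rfl, le_refl,
        if_neg (by omega : ¬ n + 1 ≤ n), ↓reduceIte]
      field_simp [hr n, ht n]
      ring
    · rw [if_neg (by omega)]
      have hsub : Finset.Ico k (n + 1) ⊆ Finset.range (n + 1) := by
        intro j hj; simp only [Finset.mem_Ico] at hj; simp only [Finset.mem_range]; omega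
      rw [← Finset.sum_subset hsub (by
        intro j hj hj'
        simp only [Finset.mem_range] at hj
        simp only [Finset.mem_Ico] at hj'
        rw [hT, if_neg (by omega), if_neg (by omega)]
        ring)]
      rw [Finset.sum_eq_sum_Ico_succ_bot (by omega : k < n + 1),
        Finset.sum_Ico_succ_top (by omega : k + 1 ≤ n)]
      have hmid : ∑ j ∈ Finset.Ico (k + 1) n, S n j * Tm j k =
          (t k - t (k + 1)) / t (k + 1) - (t k - t (k + 1)) / t n := by
        rw [← htel (fun j => (t k - t (k + 1)) / t j) (k + 1) n (by omega)]
        apply Finset.sum_congr rfl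
        intro j hj
        simp only [Finset.mem_Ico] at hj
        rw [hT]
        simp only [S, if_pos (show j < n by omega), if_pos (show k ≤ j by omega),
          if_pos (show k + 1 ≤ j by omega)]
        field_simp [hr j, ht j, ht (j + 1)]
      rw [hmid, hT, hT]
      simp only [S, if_pos (show k < n from h), if_neg (lt_irrefl n), if_pos rfl,
        le_refl, if_neg (show ¬ k + 1 ≤ k by omega), if_neg (show ¬ n + 1 ≤ n by omega),
        if_pos (show k ≤ n by omega), if_pos (show k + 1 ≤ n by omega), ↓reduceIte]
      field_simp [hr n, hr k, ht k, ht (k + 1), ht n]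
      ring
end
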